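/- arXiv:1605.04673 — 9 statements merged into one kernel-verified Lean document; each statement's English description precedes it below -/
import Mathlib

section
/- Let α > 0, t > 0 and M a positive integer. Then the double integral over D₁ = {(x,y) : x ≥ y ≥ M} of e^{-α(x²+y²)π² t} dx dy is strictly less than (1/(4 M² π⁴ α² t²)) e^{-2 α M² π² t}. -/
open Real Set MeasureTheory Filter

lemma aux_hasDerivAt (c x : ℝ) (hc : 0 < c) :
    HasDerivAt (fun x : ℝ => -(Real.exp (-(c * x ^ 2)) / (2 * c)))
      (x * Real.exp (-(c * x ^ 2))) x := by
  have h1 : HasDerivAt (fun x : ℝ => -(c * x ^ 2)) (-(c * (2 * x))) x := by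
    simpa using ((hasDerivAt_pow 2 x).const_mul c).fun_neg
  have h2 : HasDerivAt (fun x : ℝ => -(Real.exp (-(c * x ^ 2)) / (2 * c))) _ x := (h1.exp.div_const (2 * c)).fun_neg
  convert h2 using 1
  field_simp

lemma aux_tendsto (c : ℝ) (hc : 0 < c) :
    Tendsto (fun x : ℝ => -(Real.exp (-(c * x ^ 2)) / (2 * c))) atTop (nhds 0) := by
  have h1 : Tendsto (fun x : ℝ => -(c * x ^ 2)) atTop atBot := by
    apply tendsto_neg_atBot_iff.mpr
    exact (tendsto_pow_atTop (by norm_num)).const_mul_atTop hc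
  have := ((Real.tendsto_exp_atBot.comp h1).div_const (2 * c)).neg
  simpa using this

lemma aux_integral (c a : ℝ) (hc : 0 < c) (ha : 0 ≤ a) :
    ∫ x in Ioi a, x * Real.exp (-(c * x ^ 2)) = Real.exp (-(c * a ^ 2)) / (2 * c) := by
  have := integral_Ioi_of_hasDerivAt_of_nonneg (g' := fun x => x * Real.exp (-(c * x ^ 2)))
    (g := fun x : ℝ => -(Real.exp (-(c * x ^ 2)) / (2 * c))) (a := a) (l := 0)
    (aux_hasDerivAt c a hc).continuousAt.continuousWithinAt
    (fun x _ => aux_hasDerivAt c x hc)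
    (fun x hx => mul_nonneg (le_trans ha (le_of_lt hx)) (Real.exp_pos _).le)
    (aux_tendsto c hc)
  rw [this]; ring

lemma aux_integrable (c a : ℝ) (hc : 0 < c) (ha : 0 ≤ a) :
    IntegrableOn (fun x => x * Real.exp (-(c * x ^ 2))) (Ioi a) := by
  exact integrableOn_Ioi_deriv_of_nonneg
    (aux_hasDerivAt c a hc).continuousAt.continuousWithinAt
    (fun x _ => aux_hasDerivAt c x hc)
    (fun x hx => mul_nonneg (le_trans ha (le_of_lt hx)) (Real.exp_pos _).le)
    (aux_tendsto c hc)

/-- Bound for the double integral of the Gaussian over `D₁ = {(x,y) : x ≥ y ≥ M}`. -/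
theorem gaussian_double_integral_bound (α t : ℝ) (hα : 0 < α) (ht : 0 < t)
    (M : ℕ) (hM : 1 ≤ M) :
    (∫ p in {p : ℝ × ℝ | (M : ℝ) ≤ p.2 ∧ p.2 ≤ p.1},
        Real.exp (-α * (p.1 ^ 2 + p.2 ^ 2) * π ^ 2 * t)) <
      1 / (4 * M ^ 2 * π ^ 4 * α ^ 2 * t ^ 2) * Real.exp (-2 * α * M ^ 2 * π ^ 2 * t) := by
  set c : ℝ := α * π ^ 2 * t with hc_def
  have hπ : (0:ℝ) < π := Real.pi_pos
  have hc : 0 < c := by positivity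
  have hM1 : (1:ℝ) ≤ (M:ℝ) := by exact_mod_cast hM
  have hM0 : (0:ℝ) < (M:ℝ) := lt_of_lt_of_le one_pos hM1
  set φ : ℝ → ℝ := fun x => (x / M) * Real.exp (-(c * x ^ 2)) with hφ_def
  set S : Set (ℝ × ℝ) := {p : ℝ × ℝ | (M : ℝ) ≤ p.2 ∧ p.2 ≤ p.1} with hS_def
  set T : Set (ℝ × ℝ) := Ioi (M:ℝ) ×ˢ Ioi (M:ℝ) with hT_def
  set S' : Set (ℝ × ℝ) := S ∩ T with hS'_def
  have hSmeas : MeasurableSet S := by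
    apply MeasurableSet.inter
    · exact measurableSet_le measurable_const measurable_snd
    · exact measurableSet_le measurable_snd measurable_fst
  have hTmeas : MeasurableSet T := (measurableSet_Ioi).prod (measurableSet_Ioi)
  -- integrand rewrite
  have hf_eq : ∀ p : ℝ × ℝ, Real.exp (-α * (p.1 ^ 2 + p.2 ^ 2) * π ^ 2 * t)
      = Real.exp (-(c * p.1 ^ 2)) * Real.exp (-(c * p.2 ^ 2)) := by
    intro p
    rw [← Real.exp_add]
    congr 1
    ring
  set f : ℝ × ℝ → ℝ := fun p => Real.exp (-(c * p.1 ^ 2)) * Real.exp (-(c * p.2 ^ 2))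
    with hfdef
  set g : ℝ × ℝ → ℝ := fun p => φ p.1 * φ p.2 with hgdef
  -- 1D facts
  have hφ_int : IntegrableOn φ (Ioi (M:ℝ)) := by
    have := (aux_integrable c (M:ℝ) hc hM0.le).const_mul (1 / (M:ℝ))
    refine MeasureTheory.IntegrableOn.congr_fun this ?_ measurableSet_Ioi
    intro x _
    simp only [hφ_def]
    ring
  have hφ_val : ∫ x in Ioi (M:ℝ), φ x = Real.exp (-(c * (M:ℝ) ^ 2)) / (2 * c * M) := by
    have h1 : ∀ x, φ x = (1 / (M:ℝ)) * (x * Real.exp (-(c * x ^ 2))) := by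
      intro x; simp only [hφ_def]; ring
    simp_rw [h1]
    rw [integral_const_mul, aux_integral c (M:ℝ) hc hM0.le]
    field_simp
  -- integrability of g on T
  have hg_intT : IntegrableOn g T := by
    rw [IntegrableOn, hT_def, Measure.volume_eq_prod, ← Measure.prod_restrict]
    exact hφ_int.mul_prod hφ_int
  have hg_intS' : IntegrableOn g S' := hg_intT.mono_set inter_subset_right
  -- integrability of f on S
  have h1d : Integrable (fun x : ℝ => Real.exp (-(c * x ^ 2))) := by
    simpa [neg_mul] using integrable_exp_neg_mul_sq hc
  have hf_int : Integrable f := by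
    rw [hfdef, Measure.volume_eq_prod]
    exact h1d.mul_prod h1d
  -- g nonneg on T
  have hg_nonneg : ∀ p ∈ T, 0 ≤ g p := by
    rintro ⟨x, y⟩ ⟨hx, hy⟩
    have hx' : (0:ℝ) < x := lt_trans hM0 hx
    have hy' : (0:ℝ) < y := lt_trans hM0 hy
    have := Real.exp_pos (-(c * x ^ 2))
    have := Real.exp_pos (-(c * y ^ 2))
    simp only [hgdef, hφ_def]
    positivity
  -- step 1 : ∫_S f ≤ ∫_S g
  have hSae : S =ᵐ[volume] S' := by
    refine (MeasureTheory.ae_eq_set).mpr ⟨?_, ?_⟩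
    · have hsub : S \ S' ⊆ ({(M:ℝ)} ×ˢ (univ : Set ℝ)) ∪ ((univ : Set ℝ) ×ˢ {(M:ℝ)}) := by
        rintro ⟨x, y⟩ ⟨⟨h1, h2⟩, hns'⟩
        have : ¬ ((x, y) ∈ T) := fun h => hns' ⟨⟨h1, h2⟩, h⟩
        simp only [hT_def, mem_prod, mem_Ioi, not_and_or, not_lt] at this
        rcases this with h | h
        · exact Or.inl ⟨le_antisymm h (le_trans h1 h2), trivial⟩
        · exact Or.inr ⟨trivial, le_antisymm h h1⟩
      refine measure_mono_null hsub ?_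
      apply measure_union_null
      · rw [Measure.volume_eq_prod, Measure.prod_prod]; simp
      · rw [Measure.volume_eq_prod, Measure.prod_prod]; simp
    · rw [diff_eq_empty.mpr inter_subset_left, measure_empty]
  have hg_intS : IntegrableOn g S := hg_intS'.congr_set_ae hSae
  have step1 : (∫ p in S, f p) ≤ ∫ p in S, g p := by
    refine setIntegral_mono_on hf_int.integrableOn hg_intS hSmeas ?_
    rintro ⟨x, y⟩ ⟨h1, h2⟩
    have hy : (M:ℝ) ≤ y := h1
    have hx : (M:ℝ) ≤ x := le_trans h1 h2
    have e1 : (0:ℝ) < Real.exp (-(c * x ^ 2)) := Real.exp_pos _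
    have e2 : (0:ℝ) < Real.exp (-(c * y ^ 2)) := Real.exp_pos _
    have hx1 : (1:ℝ) ≤ x / M := (one_le_div hM0).mpr hx
    have hy1 : (1:ℝ) ≤ y / M := (one_le_div hM0).mpr hy
    simp only [hfdef, hgdef, hφ_def]
    have h3 : (1:ℝ) ≤ (x / M) * (y / M) := by nlinarith
    calc Real.exp (-(c * x ^ 2)) * Real.exp (-(c * y ^ 2))
        = 1 * (Real.exp (-(c * x ^ 2)) * Real.exp (-(c * y ^ 2))) := by ring
      _ ≤ ((x / M) * (y / M)) * (Real.exp (-(c * x ^ 2)) * Real.exp (-(c * y ^ 2))) := by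
          apply mul_le_mul_of_nonneg_right h3 (by positivity)
      _ = (x / M * Real.exp (-(c * x ^ 2))) * (y / M * Real.exp (-(c * y ^ 2))) := by ring
  -- step 2 : ∫_S g < ∫_T g
  have step2a : (∫ p in S, g p) = ∫ p in S', g p := setIntegral_congr_set hSae
  have hdiff_meas : MeasurableSet (T \ S') := hTmeas.diff (hSmeas.inter hTmeas)
  have hg_intdiff : IntegrableOn g (T \ S') := hg_intT.mono_set diff_subset
  have hsplit : (∫ p in T, g p) = (∫ p in S', g p) + ∫ p in T \ S', g p := by
    rw [← setIntegral_union disjoint_sdiff_self_right hdiff_meas hg_intS' hg_intdiff]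
    congr 1
    rw [union_diff_cancel inter_subset_right]
  have hpos : 0 < ∫ p in T \ S', g p := by
    rw [setIntegral_pos_iff_support_of_nonneg_ae]
    · -- measure of support ∩ (T \ S') is positive
      have hbox : (Ioo (M:ℝ) (M+1)) ×ˢ (Ioo ((M:ℝ)+1) (M+2)) ⊆ Function.support g ∩ (T \ S') := by
        rintro ⟨x, y⟩ ⟨hx, hy⟩
        simp only [mem_Ioo] at hx hy
        have hxM : (M:ℝ) < x := hx.1
        have hyM : (M:ℝ) < y := lt_trans (by linarith) hy.1
        have hxy : x < y := lt_trans hx.2 hy.1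
        refine ⟨?_, ⟨⟨hxM, hyM⟩, ?_⟩⟩
        · simp only [Function.mem_support, hgdef, hφ_def]
          have hx0 : (0:ℝ) < x := lt_trans hM0 hxM
          have hy0 : (0:ℝ) < y := lt_trans hM0 hyM
          have := Real.exp_pos (-(c * x ^ 2))
          have := Real.exp_pos (-(c * y ^ 2))
          positivity
        · rintro ⟨⟨_, h2⟩, _⟩
          exact absurd h2 (not_le.mpr hxy)
      refine lt_of_lt_of_le ?_ (measure_mono hbox)
      rw [Measure.volume_eq_prod, Measure.prod_prod, Real.volume_Ioo, Real.volume_Ioo]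
      norm_num
    · filter_upwards [ae_restrict_mem hdiff_meas] with p hp
      exact hg_nonneg p hp.1
    · exact hg_intdiff
  have step2 : (∫ p in S, g p) < ∫ p in T, g p := by
    rw [step2a, hsplit]
    linarith
  -- step 3 : compute ∫_T g
  have step3 : (∫ p in T, g p)
      = (Real.exp (-(c * (M:ℝ) ^ 2)) / (2 * c * M)) ^ 2 := by
    rw [hT_def, hgdef, Measure.volume_eq_prod, setIntegral_prod_mul, hφ_val]
    ring
  -- final
  have hfinal : (Real.exp (-(c * (M:ℝ) ^ 2)) / (2 * c * M)) ^ 2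
      = 1 / (4 * M ^ 2 * π ^ 4 * α ^ 2 * t ^ 2) * Real.exp (-2 * α * M ^ 2 * π ^ 2 * t) := by
    rw [div_pow, ← Real.exp_nat_mul]
    have h1 : (2:ℝ) * (-(c * (M:ℝ) ^ 2)) = -2 * α * M ^ 2 * π ^ 2 * t := by
      rw [hc_def]; ring
    rw [show ((2:ℕ):ℝ) = (2:ℝ) by norm_num, h1]
    have h2 : (2 * c * (M:ℝ)) ^ 2 = 4 * M ^ 2 * π ^ 4 * α ^ 2 * t ^ 2 * 1 := by
      rw [hc_def]; ring
    rw [h2]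
    field_simp
  calc (∫ p in S, Real.exp (-α * (p.1 ^ 2 + p.2 ^ 2) * π ^ 2 * t))
      = ∫ p in S, f p := by
        apply setIntegral_congr_fun hSmeas
        intro p _
        exact hf_eq p
    _ ≤ ∫ p in S, g p := step1
    _ < ∫ p in T, g p := step2
    _ = _ := by rw [step3, hfinal]
end

section
/- Suppose α ≥ α₀ > 0, (Cₙ)_{n≥0} is a real sequence with Σₙ |Cₙ|² ≤ 2M₀², and λₙ = α n² π². Then for every t ≥ T₁ > 0 and every positive integer M, the tail e(M,t) = Σ_{n=M}^∞ Cₙ e^{-λₙ t} satisfies |e(M,t)| < (√2 + 1/(4 M π² α₀ T₁)) · M₀ · e^{-α₀ M² π² T₁}. -/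
open Real

private lemma amgm_aux (ε c g : ℝ) (hε : 0 < ε) :
    c * g ≤ (ε * c ^ 2 + g ^ 2 / ε) / 2 := by
  have hεne : ε ≠ 0 := ne_of_gt hε
  have heq : (ε * c ^ 2 + g ^ 2 / ε) / 2 - c * g = (ε * c - g) ^ 2 / (2 * ε) := by
    field_simp; ring
  have hnn : 0 ≤ (ε * c - g) ^ 2 / (2 * ε) := div_nonneg (sq_nonneg _) (by positivity)
  linarith

private lemma eps_calc (s m d : ℝ) (hs : 0 < s) (hm : 0 < m) (hd : 0 < d)
    (h2 : s ^ 2 = 2) :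
    (d / (s * m) * (2 * m ^ 2) + d ^ 2 / (d / (s * m))) / 2 = s * m * d := by
  have hsne : s ≠ 0 := ne_of_gt hs
  have hmne : m ≠ 0 := ne_of_gt hm
  have hdne : d ≠ 0 := ne_of_gt hd
  have h1 : d / (s * m) * (2 * m ^ 2) = s * m * d := by
    rw [div_mul_eq_mul_div, div_eq_iff (by positivity : s * m ≠ 0)]
    linear_combination (-d * m ^ 2) * h2
  have h3 : d ^ 2 / (d / (s * m)) = s * m * d := by
    rw [div_div_eq_mul_div, div_eq_iff hdne]; ring
  rw [h1, h3]; ring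

private lemma inv_one_sub_le (x r : ℝ) (hx : 0 < x) (hr0 : 0 ≤ r) (hr1 : r < 1)
    (hrx : r * (1 + x) ≤ 1) : (1 - r)⁻¹ ≤ (1 + 1 / (2 * x)) ^ 2 := by
  have h1r : 0 < 1 - r := by linarith
  rw [inv_eq_one_div, div_le_iff₀ h1r]
  have hu : (0:ℝ) < 1 / (2 * x) := by positivity
  have hux : (1 / (2 * x)) * (2 * x) = 1 := by field_simp
  nlinarith [sq_nonneg (1 / (2 * x)), mul_nonneg (mul_nonneg hr0 hu.le) hu.le,
    mul_nonneg hr0 hu.le, mul_nonneg hu.le hu.le]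

private lemma final_aux (x m E : ℝ) (hx : 0 < x) (hm : 0 < m) (hE : 0 < E) :
    Real.sqrt 2 * m * (E * (1 + 1 / (2 * x))) < (Real.sqrt 2 + 1 / x) * m * E := by
  have hs2 : (0:ℝ) < Real.sqrt 2 := Real.sqrt_pos.mpr (by norm_num)
  have hs2sq : Real.sqrt 2 ^ 2 = 2 := Real.sq_sqrt (by norm_num)
  have hsqrt2lt : Real.sqrt 2 < 2 := by nlinarith
  have hux : (0:ℝ) < 1 / x := by positivity
  have h1 : Real.sqrt 2 * (1 + 1 / (2 * x)) < Real.sqrt 2 + 1 / x := by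
    have h2 : (1:ℝ) / (2 * x) = (1 / x) / 2 := by ring
    nlinarith [mul_lt_mul_of_pos_right hsqrt2lt hux]
  calc Real.sqrt 2 * m * (E * (1 + 1 / (2 * x)))
      = (Real.sqrt 2 * (1 + 1 / (2 * x))) * m * E := by ring
    _ < (Real.sqrt 2 + 1 / x) * m * E := by
        exact mul_lt_mul_of_pos_right (mul_lt_mul_of_pos_right h1 hm) hE

set_option maxHeartbeats 1000000 in
/-- Tail bound for the Dirichlet series: if `α ≥ α₀ > 0`, `Σ Cₙ² ≤ 2M₀²`, `λₙ = α n² π²`,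
then for `t ≥ T₁ > 0` and `M ≥ 1`,
`|Σ_{n=M}^∞ Cₙ e^(-λₙ t)| < (√2 + 1/(4Mπ²α₀T₁)) M₀ e^(-α₀ M² π² T₁)`. -/
theorem dirichlet_tail_bound (α α₀ M₀ T₁ t : ℝ) (C : ℕ → ℝ)
    (hα₀ : 0 < α₀) (hα : α₀ ≤ α) (hM₀ : 0 < M₀) (hT₁ : 0 < T₁) (ht : T₁ ≤ t)
    (hC : ∑' n : ℕ, (C n) ^ 2 ≤ 2 * M₀ ^ 2) (hCsum : Summable fun n : ℕ => (C n) ^ 2)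
    (M : ℕ) (hM : 1 ≤ M) :
    |∑' n : ℕ, C (M + n) * Real.exp (-(α * (M + n : ℕ) ^ 2 * π ^ 2) * t)| <
      (Real.sqrt 2 + 1 / (4 * M * π ^ 2 * α₀ * T₁)) * M₀ *
        Real.exp (-α₀ * M ^ 2 * π ^ 2 * T₁) := by
  have hπ : 0 < π := Real.pi_pos
  have hM1 : (1:ℝ) ≤ (M:ℝ) := by exact_mod_cast hM
  have hM0 : (0:ℝ) < (M:ℝ) := lt_of_lt_of_le one_pos hM1
  set f : ℕ → ℝ := fun n => C (M + n) * Real.exp (-(α * ((M + n : ℕ):ℝ) ^ 2 * π ^ 2) * t)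
    with hf_def
  clear_value f
  set a : ℝ := α₀ * π ^ 2 * T₁ with ha_def
  have ha : 0 < a := by positivity
  set x : ℝ := 4 * a * M with hx_def
  have hx : 0 < x := by positivity
  set r : ℝ := Real.exp (-x) with hr_def
  have hr0 : 0 ≤ r := (Real.exp_pos _).le
  have hr1 : r < 1 := Real.exp_lt_one_iff.mpr (by linarith)
  have hrx : r * (1 + x) ≤ 1 := by
    have h1 : 1 + x ≤ Real.exp x := by
      have := Real.add_one_le_exp x; linarith
    calc r * (1 + x) ≤ r * Real.exp x := mul_le_mul_of_nonneg_left h1 hr0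
      _ = 1 := by rw [hr_def, ← Real.exp_add]; simp
  set g : ℕ → ℝ := fun n => Real.exp (-a * ((M:ℝ) + n) ^ 2) with hg_def
  set G : ℕ → ℝ := fun n => Real.exp (-(2 * a) * ((M:ℝ) + n) ^ 2) with hG_def
  have hgG : ∀ n, g n ^ 2 = G n := by
    intro n
    rw [hg_def, hG_def]
    simp only [← Real.exp_add, pow_two]
    ring_nf
  have hg0 : ∀ n, 0 < g n := fun n => by rw [hg_def]; exact Real.exp_pos _
  have hG0 : ∀ n, 0 ≤ G n := fun n => by rw [hG_def]; exact (Real.exp_pos _).le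
  have hGle : ∀ n, G n ≤ Real.exp (-(2 * a) * (M:ℝ) ^ 2) * r ^ n := by
    intro n
    rw [hG_def, hr_def, ← Real.exp_nat_mul, ← Real.exp_add]
    apply Real.exp_le_exp.mpr
    have hn : (0:ℝ) ≤ (n:ℝ) := Nat.cast_nonneg n
    rw [hx_def]
    nlinarith [sq_nonneg (n:ℝ), mul_nonneg ha.le (sq_nonneg (n:ℝ))]
  have hGsum : Summable G :=
    Summable.of_nonneg_of_le hG0 hGle
      ((summable_geometric_of_lt_one hr0 hr1).mul_left _)
  set B : ℝ := ∑' n, G n with hB_def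
  have hBle : B ≤ Real.exp (-(2 * a) * (M:ℝ) ^ 2) * (1 - r)⁻¹ := by
    rw [hB_def]
    calc (∑' n, G n) ≤ ∑' n, Real.exp (-(2 * a) * (M:ℝ) ^ 2) * r ^ n :=
          Summable.tsum_le_tsum hGle hGsum ((summable_geometric_of_lt_one hr0 hr1).mul_left _)
      _ = Real.exp (-(2 * a) * (M:ℝ) ^ 2) * (1 - r)⁻¹ := by
          rw [tsum_mul_left, tsum_geometric_of_lt_one hr0 hr1]
  have hinv : (1 - r)⁻¹ ≤ (1 + 1 / (2 * x)) ^ 2 := inv_one_sub_le x r hx hr0 hr1 hrx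
  set E : ℝ := Real.exp (-a * (M:ℝ) ^ 2) with hE_def
  have hE : 0 < E := by rw [hE_def]; exact Real.exp_pos _
  set D : ℝ := E * (1 + 1 / (2 * x)) with hD_def
  have hD : 0 < D := by
    rw [hD_def]; have : (0:ℝ) < 1 + 1 / (2 * x) := by positivity
    exact mul_pos hE this
  have hBD : B ≤ D ^ 2 := by
    have hsq : E ^ 2 = Real.exp (-(2 * a) * (M:ℝ) ^ 2) := by
      rw [hE_def, pow_two, ← Real.exp_add]; ring_nf
    calc B ≤ Real.exp (-(2 * a) * (M:ℝ) ^ 2) * (1 - r)⁻¹ := hBle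
      _ ≤ Real.exp (-(2 * a) * (M:ℝ) ^ 2) * (1 + 1 / (2 * x)) ^ 2 :=
          mul_le_mul_of_nonneg_left hinv (Real.exp_pos _).le
      _ = D ^ 2 := by rw [hD_def, mul_pow, hsq]
  clear_value B
  have hs2 : (0:ℝ) < Real.sqrt 2 := Real.sqrt_pos.mpr (by norm_num)
  have hs2sq : Real.sqrt 2 ^ 2 = 2 := Real.sq_sqrt (by norm_num)
  set ε : ℝ := D / (Real.sqrt 2 * M₀) with hε_def
  have hε : 0 < ε := by rw [hε_def]; positivity
  have hCsh : Summable (fun n => C (M + n) ^ 2) := by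
    have h := (summable_nat_add_iff (f := fun n => C n ^ 2) M).mpr hCsum
    exact h.congr fun n => by rw [add_comm]
  set A : ℝ := ∑' n, C (M + n) ^ 2 with hA_def
  have hA0 : 0 ≤ A := tsum_nonneg (fun n => sq_nonneg _)
  have hA : A ≤ 2 * M₀ ^ 2 := by
    have hsum := Summable.sum_add_tsum_nat_add (f := fun n => C n ^ 2) M hCsum
    have hfin : 0 ≤ ∑ i ∈ Finset.range M, C i ^ 2 :=
      Finset.sum_nonneg fun i _ => sq_nonneg _
    have hAeq : A = ∑' n : ℕ, C (n + M) ^ 2 := by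
      rw [hA_def]; exact tsum_congr fun n => by rw [add_comm]
    rw [hAeq]
    linarith
  clear_value A
  have hexp_le : ∀ n : ℕ, Real.exp (-(α * ((M + n : ℕ):ℝ) ^ 2 * π ^ 2) * t) ≤ g n := by
    intro n
    have hcast : ((M + n : ℕ):ℝ) = (M:ℝ) + n := by push_cast; ring
    have hαt : α₀ * T₁ ≤ α * t := mul_le_mul hα ht hT₁.le (hα₀.le.trans hα)
    have hkey : 0 ≤ (α * t - α₀ * T₁) * (π ^ 2 * ((M:ℝ) + n) ^ 2) :=
      mul_nonneg (by linarith) (by positivity)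
    rw [hg_def]
    apply Real.exp_le_exp.mpr
    rw [hcast, ha_def]
    nlinarith [hkey]
  have h_pt : ∀ n : ℕ, |f n| ≤ (ε * C (M + n) ^ 2 + G n / ε) / 2 := by
    intro n
    have h1 : |f n| ≤ |C (M + n)| * g n := by
      rw [hf_def]
      simp only [abs_mul, Real.abs_exp]
      exact mul_le_mul_of_nonneg_left (hexp_le n) (abs_nonneg _)
    have h2 : |C (M + n)| * g n ≤ (ε * C (M + n) ^ 2 + G n / ε) / 2 := by
      rw [← hgG n, ← sq_abs (C (M + n))]
      exact amgm_aux ε |C (M + n)| (g n) hε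
    linarith
  clear_value g G
  have hRsum : Summable (fun n => (ε * C (M + n) ^ 2 + G n / ε) / 2) :=
    Summable.div_const ((hCsh.mul_left ε).add (hGsum.div_const ε)) 2
  have hfabs : Summable (fun n => |f n|) :=
    Summable.of_nonneg_of_le (fun n => abs_nonneg _) h_pt hRsum
  have hmain : |∑' n, f n| ≤ Real.sqrt 2 * M₀ * D := by
    calc |∑' n, f n| ≤ ∑' n, |f n| := by
          have hnorm : ‖∑' n, f n‖ ≤ ∑' n, ‖f n‖ :=
            norm_tsum_le_tsum_norm (f := f) (by simpa [Real.norm_eq_abs] using hfabs)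
          simpa [Real.norm_eq_abs] using hnorm
      _ ≤ ∑' n, (ε * C (M + n) ^ 2 + G n / ε) / 2 := Summable.tsum_le_tsum h_pt hfabs hRsum
      _ = (ε * A + B / ε) / 2 := by
          rw [hA_def, hB_def, tsum_div_const,
            Summable.tsum_add (hCsh.mul_left ε) (hGsum.div_const ε), tsum_mul_left, tsum_div_const]
      _ ≤ (ε * (2 * M₀ ^ 2) + D ^ 2 / ε) / 2 := by
          have h1 : ε * A ≤ ε * (2 * M₀ ^ 2) := mul_le_mul_of_nonneg_left hA hε.le
          have h2 : B / ε ≤ D ^ 2 / ε := (div_le_div_iff_of_pos_right hε).mpr hBD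
          linarith
      _ = Real.sqrt 2 * M₀ * D := by
          rw [hε_def]
          exact eps_calc (Real.sqrt 2) M₀ D hs2 hM₀ hD hs2sq
  have hx_eq : 4 * (M:ℝ) * π ^ 2 * α₀ * T₁ = x := by rw [hx_def, ha_def]; ring
  have hexp_eq : Real.exp (-α₀ * (M:ℝ) ^ 2 * π ^ 2 * T₁) = E := by
    rw [hE_def, ha_def]; ring_nf
  have hfinal : Real.sqrt 2 * M₀ * D <
      (Real.sqrt 2 + 1 / (4 * M * π ^ 2 * α₀ * T₁)) * M₀ *
        Real.exp (-α₀ * (M:ℝ) ^ 2 * π ^ 2 * T₁) := by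
    rw [hx_eq, hexp_eq, hD_def]
    exact final_aux x M₀ E hx hM₀ hE
  calc |∑' n, f n| ≤ Real.sqrt 2 * M₀ * D := hmain
    _ < _ := hfinal
end

section
/- Let (Cₙ)_{n≥0} be a square-summable real sequence and λₙ = α n² π² with α > 0. If y(t) = Σ_{n=0}^∞ Cₙ e^{-λₙ t} vanishes identically on some nontrivial interval [T₁, T₂] with 0 < T₁ < T₂, then Cₙ = 0 for all n. -/
open Real Filter

lemma aux_summable_exp (c : ℝ) (hc : 0 < c) :
    Summable (fun n : ℕ => Real.exp (-c * n ^ 2)) := by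
  refine Summable.of_nonneg_of_le (fun n => (Real.exp_pos _).le) (fun n => ?_)
    (summable_geometric_of_lt_one (Real.exp_pos (-c)).le ?_)
  · rw [← Real.exp_nat_mul]
    apply Real.exp_le_exp.2
    have h : (n : ℝ) ≤ (n : ℝ) ^ 2 := by
      rcases Nat.eq_zero_or_pos n with h | h
      · simp [h]
      · have : (1:ℝ) ≤ n := by exact_mod_cast h
        nlinarith
    nlinarith
  · rw [Real.exp_lt_one_iff]; linarith

lemma aux_summable_exp' (a p t : ℝ) (hc : 0 < a * p ^ 2 * t) :
    Summable (fun n : ℕ => Real.exp (-(a * n ^ 2 * p ^ 2) * t)) := by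
  have := aux_summable_exp (a * p ^ 2 * t) hc
  refine this.congr fun n => ?_
  ring_nf

/-- Uniqueness: if a Dirichlet series with square-summable coefficients and exponents
`λₙ = α n² π²` vanishes on a nontrivial interval `[T₁,T₂]`, all coefficients vanish. -/
theorem dirichlet_series_vanishing (α T₁ T₂ : ℝ) (hα : 0 < α) (hT₁ : 0 < T₁) (hT : T₁ < T₂)
    (C : ℕ → ℝ) (hCsum : Summable fun n : ℕ => (C n) ^ 2)
    (hzero : ∀ t ∈ Set.Icc T₁ T₂,
      ∑' n : ℕ, C n * Real.exp (-(α * n ^ 2 * π ^ 2) * t) = 0) :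
    ∀ n : ℕ, C n = 0 := by
  have hπ : 0 < π := Real.pi_pos
  -- coefficients are bounded
  obtain ⟨M, hM0, hM⟩ : ∃ M : ℝ, 0 ≤ M ∧ ∀ n, |C n| ≤ M := by
    obtain ⟨M, hM⟩ := hCsum.tendsto_atTop_zero.bddAbove_range
    refine ⟨Real.sqrt M, Real.sqrt_nonneg _, fun n => ?_⟩
    have : (C n) ^ 2 ≤ M := hM ⟨n, rfl⟩
    calc |C n| = Real.sqrt ((C n) ^ 2) := (Real.sqrt_sq_eq_abs _).symm
    _ ≤ Real.sqrt M := Real.sqrt_le_sqrt this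
  have hsum : ∀ t : ℝ, 0 < t → Summable (fun n : ℕ => M * Real.exp (-(α * n ^ 2 * π ^ 2) * t)) :=
    fun t ht => (aux_summable_exp' α π t (by positivity)).mul_left M
  have hsumC : ∀ t : ℝ, 0 < t →
      Summable (fun n : ℕ => C n * Real.exp (-(α * n ^ 2 * π ^ 2) * t)) := by
    intro t ht
    refine (hsum t ht).of_norm_bounded fun n => ?_
    rw [norm_mul, Real.norm_eq_abs, Real.norm_eq_abs, abs_of_pos (Real.exp_pos _)]
    exact mul_le_mul_of_nonneg_right (hM n) (Real.exp_pos _).le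
  -- the complex extension
  set F : ℂ → ℂ := fun s => ∑' n : ℕ, (C n : ℂ) * Complex.exp (-(α * n ^ 2 * π ^ 2 : ℝ) * s)
    with hF
  have hnorm : ∀ (n : ℕ) (s : ℂ),
      ‖(C n : ℂ) * Complex.exp (-(α * n ^ 2 * π ^ 2 : ℝ) * s)‖
        = |C n| * Real.exp (-(α * n ^ 2 * π ^ 2) * s.re) := by
    intro n s
    have hre : ((-(α * n ^ 2 * π ^ 2 : ℝ) : ℂ) * s).re = -(α * n ^ 2 * π ^ 2) * s.re := by
      simp only [Complex.mul_re, Complex.neg_re, Complex.neg_im, Complex.ofReal_re,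
        Complex.ofReal_im]
      ring
    rw [norm_mul, Complex.norm_exp,
      Complex.norm_real, Real.norm_eq_abs, hre]
  -- differentiability on half planes
  have hdiff : ∀ δ : ℝ, 0 < δ → DifferentiableOn ℂ F {s : ℂ | δ < s.re} := by
    intro δ hδ
    refine Complex.differentiableOn_tsum_of_summable_norm (hsum δ hδ) (fun n => ?_)
      (isOpen_lt continuous_const Complex.continuous_re) (fun n w hw => ?_)
    · exact ((Complex.differentiable_exp.comp ((differentiable_id.const_mul _))).const_mul
        _).differentiableOn
    · rw [hnorm]
      have hw' : δ < w.re := hw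
      have h1 : -(α * n ^ 2 * π ^ 2) * w.re ≤ -(α * n ^ 2 * π ^ 2) * δ := by
        have hc : (0:ℝ) ≤ α * n ^ 2 * π ^ 2 := by positivity
        nlinarith
      exact mul_le_mul (hM n) (Real.exp_le_exp.2 h1) (Real.exp_pos _).le hM0
  have hopen : IsOpen {s : ℂ | 0 < s.re} := isOpen_lt continuous_const Complex.continuous_re
  have hanalytic : AnalyticOnNhd ℂ F {s : ℂ | 0 < s.re} := by
    refine DifferentiableOn.analyticOnNhd (fun s hs => ?_) hopen
    have hs' : (0:ℝ) < s.re := hs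
    have h2 : s ∈ {z : ℂ | s.re / 2 < z.re} := by simp; linarith
    exact ((hdiff (s.re / 2) (by linarith)).differentiableAt
      ((isOpen_lt continuous_const Complex.continuous_re).mem_nhds h2)).differentiableWithinAt
  -- F is the complexification of the real series
  have hFreal : ∀ t : ℝ, 0 < t →
      F (t : ℂ) = ((∑' n : ℕ, C n * Real.exp (-(α * n ^ 2 * π ^ 2) * t) : ℝ) : ℂ) := by
    intro t ht
    rw [Complex.ofReal_tsum]
    refine tsum_congr fun n => ?_
    push_cast [Complex.ofReal_exp]
    ring_nf
  -- F vanishes frequently near T₁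
  have hfreq : ∃ᶠ z in nhdsWithin (T₁ : ℂ) {(T₁ : ℂ)}ᶜ, F z = 0 := by
    set x : ℕ → ℝ := fun k => T₁ + (T₂ - T₁) / (k + 1) with hx
    have hxgt : ∀ k : ℕ, T₁ < x k := by
      intro k
      have h0 : (0:ℝ) < (T₂ - T₁) / (k + 1) := by
        apply div_pos (by linarith)
        have : (0:ℝ) ≤ (k:ℝ) := Nat.cast_nonneg k
        linarith
      simp only [hx]; linarith
    have hxmem : ∀ k, x k ∈ Set.Icc T₁ T₂ := by
      intro k
      refine ⟨(hxgt k).le, ?_⟩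
      have h1 : (T₂ - T₁) / (k + 1) ≤ T₂ - T₁ := by
        apply div_le_self (by linarith)
        have : (0:ℝ) ≤ (k:ℝ) := Nat.cast_nonneg k
        linarith
      simp only [hx]; linarith
    have hxlim : Tendsto (fun k => ((x k : ℝ) : ℂ)) atTop
        (nhdsWithin (T₁ : ℂ) {(T₁ : ℂ)}ᶜ) := by
      apply tendsto_nhdsWithin_of_tendsto_nhds_of_eventually_within
      · have h1 : Tendsto x atTop (nhds T₁) := by
          have h2 : Tendsto (fun k : ℕ => (T₂ - T₁) / (k + 1)) atTop (nhds 0) := by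
            apply Tendsto.div_atTop tendsto_const_nhds
            exact tendsto_atTop_add_const_right _ _ tendsto_natCast_atTop_atTop
          have := h2.const_add T₁
          simpa [hx] using this
        exact (Complex.continuous_ofReal.tendsto _).comp h1
      · refine Eventually.of_forall fun k => ?_
        simp only [Set.mem_compl_iff, Set.mem_singleton_iff]
        intro h
        have h2 : x k = T₁ := by exact_mod_cast h
        have := hxgt k
        linarith
    refine hxlim.frequently (Frequently.of_forall fun k => ?_)
    rw [hFreal (x k) (lt_of_lt_of_le hT₁ (hxmem k).1), hzero (x k) (hxmem k)]
    simp
  -- identity theorem: F vanishes on the half plane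
  have hFzero : Set.EqOn F 0 {s : ℂ | 0 < s.re} :=
    hanalytic.eqOn_zero_of_preconnected_of_frequently_eq_zero
      (convex_halfSpace_re_gt 0).isPreconnected (by simpa using hT₁) hfreq
  -- the real series vanishes for all positive t
  have hy : ∀ t : ℝ, 0 < t → ∑' n : ℕ, C n * Real.exp (-(α * n ^ 2 * π ^ 2) * t) = 0 := by
    intro t ht
    have h1 : F (t : ℂ) = 0 := hFzero (by simpa using ht)
    rw [hFreal t ht] at h1
    exact_mod_cast h1
  -- strong induction on n
  intro n
  induction n using Nat.strong_induction_on with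
  | _ n ih =>
  -- dominated convergence: e^{λₙ t} y(t) → Cₙ
  set lam : ℕ → ℝ := fun m => α * m ^ 2 * π ^ 2 with hlam
  have hlam_mono : ∀ {p q : ℕ}, p ≤ q → lam p ≤ lam q := by
    intro p q hpq
    have : (p:ℝ) ≤ q := by exact_mod_cast hpq
    have hp : (0:ℝ) ≤ p := Nat.cast_nonneg p
    have h2 : (p:ℝ) ^ 2 ≤ (q:ℝ) ^ 2 := by nlinarith
    simp only [hlam]
    exact mul_le_mul_of_nonneg_right (mul_le_mul_of_nonneg_left h2 hα.le) (by positivity)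
  have key : Tendsto (fun t : ℝ => ∑' m : ℕ, C m * Real.exp ((lam n - lam m) * t)) atTop
      (nhds (∑' m : ℕ, if m = n then C n else 0)) := by
    apply tendsto_tsum_of_dominated_convergence
      (bound := fun m => M * Real.exp (lam n) * Real.exp (-(lam m)))
    · have h1 : Summable (fun m : ℕ => Real.exp (-(α * m ^ 2 * π ^ 2) * 1)) :=
        aux_summable_exp' α π 1 (by positivity)
      have h2 := (h1.mul_left (M * Real.exp (lam n)))
      refine h2.congr fun m => ?_
      simp [hlam]
    · intro m
      rcases lt_trichotomy m n with h | h | h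
      · rw [if_neg (Nat.ne_of_lt h)]
        simp only [ih m h, zero_mul]
        exact tendsto_const_nhds
      · subst h
        simp only [sub_self, zero_mul, Real.exp_zero, mul_one, if_pos rfl]
        exact tendsto_const_nhds
      · have hneq : m ≠ n := Nat.ne_of_gt h
        rw [if_neg hneq]
        have hlt : lam n - lam m < 0 := by
          have h4 : (n:ℝ) < m := by exact_mod_cast h
          have hn : (0:ℝ) ≤ n := Nat.cast_nonneg n
          have h5 : (n:ℝ) ^ 2 < (m:ℝ) ^ 2 := by nlinarith
          have h6 : α * (n:ℝ) ^ 2 * π ^ 2 < α * (m:ℝ) ^ 2 * π ^ 2 :=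
            mul_lt_mul_of_pos_right (mul_lt_mul_of_pos_left h5 hα) (by positivity)
          simp only [hlam]; linarith
        have h3 : Tendsto (fun t : ℝ => (lam n - lam m) * t) atTop atBot :=
          tendsto_id.const_mul_atTop_of_neg hlt
        have h4 : Tendsto (fun t : ℝ => Real.exp ((lam n - lam m) * t)) atTop (nhds 0) :=
          Real.tendsto_exp_atBot.comp h3
        have h5 := h4.const_mul (C m)
        simpa using h5
    · filter_upwards [eventually_ge_atTop (1:ℝ)] with t ht m
      rw [Real.norm_eq_abs, abs_mul, abs_of_pos (Real.exp_pos _)]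
      rcases lt_or_ge m n with h | h
      · simp [ih m h]
        positivity
      · have h1 : (lam n - lam m) * t ≤ lam n - lam m := by
          have := hlam_mono h
          nlinarith
        calc |C m| * Real.exp ((lam n - lam m) * t)
            ≤ M * Real.exp (lam n - lam m) :=
              mul_le_mul (hM m) (Real.exp_le_exp.2 h1) (Real.exp_pos _).le hM0
          _ = M * Real.exp (lam n) * Real.exp (-(lam m)) := by
              rw [mul_assoc, ← Real.exp_add]; ring_nf
  have htsum : (∑' m : ℕ, if m = n then C n else 0) = C n := tsum_ite_eq n (fun _ => C n)
  rw [htsum] at key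
  -- but the function is eventually 0
  have hzero' : ∀ᶠ t : ℝ in atTop,
      (∑' m : ℕ, C m * Real.exp ((lam n - lam m) * t)) = 0 := by
    filter_upwards [eventually_gt_atTop (0:ℝ)] with t ht
    have h1 : (∑' m : ℕ, C m * Real.exp ((lam n - lam m) * t))
        = Real.exp (lam n * t) * ∑' m : ℕ, C m * Real.exp (-(lam m) * t) := by
      rw [← tsum_mul_left]
      refine tsum_congr fun m => ?_
      rw [show Real.exp (lam n * t) * (C m * Real.exp (-(lam m) * t))
          = C m * (Real.exp (lam n * t) * Real.exp (-(lam m) * t)) by ring,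
        ← Real.exp_add]
      congr 2
      ring
    rw [h1, hy t ht, mul_zero]
  have h0 : Tendsto (fun _ : ℝ => (0:ℝ)) atTop (nhds (C n)) := Tendsto.congr' hzero' key
  exact (tendsto_nhds_unique tendsto_const_nhds h0).symm
end

section
/- Let α, β > 0 and u₀, v₀ square-summable coefficient sequences (Cₙ), (Dₙ). If Σ_{n=0}^∞ Cₙ e^{-α n² π² t} = Σ_{n=0}^∞ Dₙ e^{-β n² π² t} for all t in an interval [T₁,T₂] with 0 < T₁ < T₂, then for every n with Cₙ ≠ 0 there exists m with Dₘ = Cₙ and β m² = α n², and vice versa (the nonzero coefficient–exponent pairs coincide). -/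
open Real

section Aux

open Filter Finset

/-- strict monotonicity of `n ↦ c n²`. -/
lemma expcoeff_strictMono {c : ℝ} (hc : 0 < c) : StrictMono (fun n : ℕ => c * (n : ℝ) ^ 2) := by
  intro m n h
  have hmn : (m : ℝ) < n := by exact_mod_cast h
  have : (m : ℝ) ^ 2 < (n : ℝ) ^ 2 := by
    have hm : (0:ℝ) ≤ m := Nat.cast_nonneg m
    nlinarith
  exact mul_lt_mul_of_pos_left this hc

lemma expcoeff_injective {c : ℝ} (hc : 0 < c) :
    Function.Injective (fun n : ℕ => c * (n : ℝ) ^ 2) :=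
  (expcoeff_strictMono hc).injective

/-- threshold for `c n² > y`. -/
lemma expcoeff_cross {c : ℝ} (hc : 0 < c) (y : ℝ) :
    ∃ N : ℕ, (∀ n : ℕ, n < N → c * (n : ℝ) ^ 2 ≤ y) ∧ (∀ n : ℕ, N ≤ n → y < c * (n : ℝ) ^ 2) := by
  by_cases hy : y < 0
  · exact ⟨0, fun n hn => absurd hn (Nat.not_lt_zero n), fun n _ =>
      lt_of_lt_of_le hy (by positivity)⟩
  · push_neg at hy
    have hex : ∃ n : ℕ, y < c * (n : ℝ) ^ 2 := by
      obtain ⟨k, hk⟩ := exists_nat_gt (y / c)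
      refine ⟨k, ?_⟩
      have h1 : y < c * k := by
        have := (div_lt_iff₀ hc).1 hk
        linarith
      have h2 : c * (k:ℝ) ≤ c * (k:ℝ)^2 := by
        have : (k:ℝ) ≤ (k:ℝ)^2 := by
          have hk0 : (0:ℝ) ≤ k := Nat.cast_nonneg k
          have : (k:ℝ) ≤ k * k := by
            rcases Nat.eq_zero_or_pos k with rfl | hkpos
            · simp
            · have : (1:ℝ) ≤ k := by exact_mod_cast hkpos
              nlinarith
          nlinarith
        nlinarith
      linarith
    classical
    refine ⟨Nat.find hex, fun n hn => ?_, fun n hn => ?_⟩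
    · have := Nat.find_min hex hn
      push_neg at this
      exact this
    · exact lt_of_lt_of_le (Nat.find_spec hex)
        ((expcoeff_strictMono hc).monotone hn)

/-- coefficients of a square-summable sequence are bounded. -/
lemma bound_of_sq_summable {A : ℕ → ℝ} (hA : Summable fun n => (A n) ^ 2) :
    ∃ M : ℝ, 0 ≤ M ∧ ∀ n, |A n| ≤ M := by
  refine ⟨Real.sqrt (∑' n, (A n) ^ 2), Real.sqrt_nonneg _, fun n => ?_⟩
  have h1 : (A n) ^ 2 ≤ ∑' n, (A n) ^ 2 := Summable.le_tsum hA n (fun m _ => sq_nonneg _)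
  calc |A n| = Real.sqrt ((A n) ^ 2) := by rw [Real.sqrt_sq_eq_abs]
    _ ≤ Real.sqrt (∑' n, (A n) ^ 2) := Real.sqrt_le_sqrt h1

lemma summable_exp_neg_sq {c s : ℝ} (hc : 0 < c) (hs : 0 < s) :
    Summable fun n : ℕ => Real.exp (-(c * (n : ℝ) ^ 2) * s) := by
  have hr0 : (0:ℝ) ≤ Real.exp (-(c * s)) := (Real.exp_pos _).le
  have hr1 : Real.exp (-(c * s)) < 1 := by
    rw [Real.exp_lt_one_iff]
    nlinarith
  refine Summable.of_nonneg_of_le (fun n => (Real.exp_pos _).le) (fun n => ?_)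
    (summable_geometric_of_lt_one hr0 hr1)
  rw [← Real.exp_nat_mul]
  apply Real.exp_le_exp.2
  have hn : (n:ℝ) ≤ (n:ℝ)^2 := by
    rcases Nat.eq_zero_or_pos n with rfl | hn
    · simp
    · have : (1:ℝ) ≤ n := by exact_mod_cast hn
      nlinarith
  nlinarith [mul_le_mul_of_nonneg_right hn (mul_pos hc hs).le]

lemma summable_term {c s M : ℝ} (hc : 0 < c) (hs : 0 < s) {A : ℕ → ℝ} (hA : ∀ n, |A n| ≤ M) :
    Summable fun n : ℕ => A n * Real.exp (-(c * (n : ℝ) ^ 2) * s) := by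
  refine Summable.of_norm_bounded ((summable_exp_neg_sq hc hs).mul_left M) (fun n => ?_)
  rw [norm_mul, Real.norm_eq_abs, Real.norm_eq_abs, Real.abs_exp]
  exact mul_le_mul_of_nonneg_right (hA n) (Real.exp_pos _).le

end Aux

section Complex

open Filter

/-- Differentiability of the complex Dirichlet series on a right half plane. -/
lemma diffOn_dirichlet {c s M : ℝ} (hc : 0 < c) (hs : 0 < s) {A : ℕ → ℝ}
    (hA : ∀ n, |A n| ≤ M) :
    DifferentiableOn ℂ
      (fun z : ℂ => ∑' n : ℕ, (A n : ℂ) * Complex.exp (((-(c * (n : ℝ) ^ 2) : ℝ) : ℂ) * z))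
      {z : ℂ | s < z.re} := by
  have hM : 0 ≤ M := le_trans (abs_nonneg _) (hA 0)
  apply Complex.differentiableOn_tsum_of_summable_norm
    (u := fun n : ℕ => M * Real.exp (-(c * (n : ℝ) ^ 2) * s))
  · exact (summable_exp_neg_sq hc hs).mul_left M
  · intro i
    apply Differentiable.differentiableOn
    exact (differentiable_const _).mul
      (Complex.differentiable_exp.comp ((differentiable_const _).mul differentiable_id))
  · exact isOpen_lt continuous_const Complex.continuous_re
  · intro i w hw
    have hw' : s < w.re := hw
    rw [norm_mul, Complex.norm_real, Real.norm_eq_abs, Complex.norm_exp]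
    rw [Complex.re_ofReal_mul]
    have hneg : -(c * (i : ℝ) ^ 2) ≤ 0 := by
      have : (0:ℝ) ≤ c * (i : ℝ) ^ 2 := by positivity
      linarith
    have hexp : -(c * (i : ℝ) ^ 2) * w.re ≤ -(c * (i : ℝ) ^ 2) * s :=
      mul_le_mul_of_nonpos_left hw'.le hneg
    exact mul_le_mul (hA i) (Real.exp_le_exp.2 hexp) (Real.exp_pos _).le hM

/-- Extension of the equality of the two series from an interval to a half line,
by analytic continuation. -/
lemma series_eq_of_eq_on_Icc {a b T₁ T₂ : ℝ} (ha : 0 < a) (hb : 0 < b) (hT₁ : 0 < T₁)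
    (hT : T₁ < T₂) {C D : ℕ → ℝ} {M : ℝ} (hC : ∀ n, |C n| ≤ M) (hD : ∀ n, |D n| ≤ M)
    (heq : ∀ t ∈ Set.Icc T₁ T₂,
      ∑' n : ℕ, C n * Real.exp (-(a * (n : ℝ) ^ 2) * t) =
        ∑' n : ℕ, D n * Real.exp (-(b * (n : ℝ) ^ 2) * t)) :
    ∀ t : ℝ, T₁ ≤ t →
      ∑' n : ℕ, C n * Real.exp (-(a * (n : ℝ) ^ 2) * t) =
        ∑' n : ℕ, D n * Real.exp (-(b * (n : ℝ) ^ 2) * t) := by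
  set s : ℝ := T₁ / 2 with hsdef
  have hs : 0 < s := by positivity
  have hsT : s < T₁ := by simp [hsdef]; linarith
  set Ω : Set ℂ := {z : ℂ | s < z.re} with hΩdef
  set FC : ℂ → ℂ := fun z => ∑' n : ℕ, (C n : ℂ) * Complex.exp (((-(a * (n : ℝ) ^ 2) : ℝ) : ℂ) * z)
    with hFCdef
  set FD : ℂ → ℂ := fun z => ∑' n : ℕ, (D n : ℂ) * Complex.exp (((-(b * (n : ℝ) ^ 2) : ℝ) : ℂ) * z)
    with hFDdef
  have hdiff : DifferentiableOn ℂ (fun z => FC z - FD z) Ω :=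
    (diffOn_dirichlet ha hs hC).sub (diffOn_dirichlet hb hs hD)
  have hopen : IsOpen Ω := isOpen_lt continuous_const Complex.continuous_re
  have han : AnalyticOnNhd ℂ (fun z => FC z - FD z) Ω := hdiff.analyticOnNhd hopen
  -- restrict to the reals
  set f : ℝ → ℂ := fun t => FC (t : ℂ) - FD (t : ℂ) with hfdef
  have hfan : AnalyticOnNhd ℝ f (Set.Ioi s) := by
    have h1 : AnalyticOnNhd ℝ (fun z => FC z - FD z) Ω := han.restrictScalars
    have h2 : AnalyticOnNhd ℝ (fun t : ℝ => (t : ℂ)) (Set.Ioi s) := fun x _ =>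
      Complex.ofRealCLM.analyticAt x
    have h3 : Set.MapsTo (fun t : ℝ => (t : ℂ)) (Set.Ioi s) Ω := by
      intro t ht
      simpa [hΩdef] using (ht : s < t)
    exact h1.comp h2 h3
  -- real values are real series
  have hreal : ∀ (A : ℕ → ℝ) (c : ℝ) (t : ℝ),
      (∑' n : ℕ, (A n : ℂ) * Complex.exp (((-(c * (n : ℝ) ^ 2) : ℝ) : ℂ) * (t : ℂ))) =
        ((∑' n : ℕ, A n * Real.exp (-(c * (n : ℝ) ^ 2) * t) : ℝ) : ℂ) := by
    intro A c t
    rw [Complex.ofReal_tsum]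
    apply tsum_congr
    intro n
    push_cast [Complex.ofReal_exp]
    ring_nf
  -- f vanishes on the interval
  have hzero : ∀ x ∈ Set.Icc T₁ T₂, f x = 0 := by
    intro x hx
    have hx' := heq x hx
    show FC (x : ℂ) - FD (x : ℂ) = 0
    rw [hFCdef, hFDdef]
    simp only []
    rw [hreal C a x, hreal D b x, hx', sub_self]
  -- frequently zero near T₂
  have hfreq : ∃ᶠ z in nhdsWithin T₂ {T₂}ᶜ, f z = 0 := by
    have h1 : ∀ᶠ z in nhdsWithin T₂ (Set.Iio T₂), f z = 0 := by
      filter_upwards [Ioo_mem_nhdsLT hT] with z hz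
      exact hzero z ⟨hz.1.le, hz.2.le⟩
    exact h1.frequently.filter_mono (nhdsWithin_mono _ (fun x hx => ne_of_lt hx))
  have heqon : Set.EqOn f 0 (Set.Ioi s) :=
    hfan.eqOn_zero_of_preconnected_of_frequently_eq_zero isPreconnected_Ioi
      (by simp only [Set.mem_Ioi]; linarith) hfreq
  intro t ht
  have htmem : t ∈ Set.Ioi s := by simp only [Set.mem_Ioi]; linarith
  have := heqon htmem
  simp only [hfdef, Pi.zero_apply, sub_eq_zero] at this
  have h1 := (hreal C a t).symm.trans (this.trans (hreal D b t))
  exact_mod_cast h1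

end Complex

section Key

open Filter Finset

open Classical in
/-- combined fiber coefficient difference -/
noncomputable def gdiff (a b : ℝ) (C D : ℕ → ℝ) (y : ℝ) : ℝ :=
  (if h : ∃ n : ℕ, a * (n : ℝ) ^ 2 = y then C h.choose else 0) -
    (if h : ∃ m : ℕ, b * (m : ℝ) ^ 2 = y then D h.choose else 0)

lemma gdiff_swap (a b : ℝ) (C D : ℕ → ℝ) (y : ℝ) :
    gdiff b a D C y = -(gdiff a b C D y) := by
  unfold gdiff
  ring

open Classical in
/-- A fiber sum inside a range. -/
lemma fiber_sum {c : ℝ} (hc : 0 < c) (N : ℕ) (y t lam : ℝ)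
    (hy : ∀ n : ℕ, c * (n : ℝ) ^ 2 = y → n < N) (A : ℕ → ℝ) :
    ∑ n ∈ (Finset.range N).filter (fun n : ℕ => c * (n : ℝ) ^ 2 = y),
        (A n * Real.exp ((lam - c * (n : ℝ) ^ 2) * t))
      = (if h : ∃ n : ℕ, c * (n : ℝ) ^ 2 = y then A h.choose else 0)
          * Real.exp ((lam - y) * t) := by
  classical
  have hfilt : (Finset.range N).filter (fun n : ℕ => c * (n : ℝ) ^ 2 = y)
      = if h : ∃ n : ℕ, c * (n : ℝ) ^ 2 = y then {h.choose} else ∅ := by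
    split_ifs with h
    · ext k
      simp only [Finset.mem_filter, Finset.mem_range, Finset.mem_singleton]
      constructor
      · rintro ⟨-, hk⟩
        exact expcoeff_injective hc (hk.trans h.choose_spec.symm)
      · rintro rfl
        exact ⟨hy _ h.choose_spec, h.choose_spec⟩
    · ext k
      simp only [Finset.mem_filter, Finset.mem_range, Finset.notMem_empty, iff_false, not_and]
      intro _ hk
      exact h ⟨k, hk⟩
  rw [hfilt]
  split_ifs with h
  · rw [Finset.sum_singleton, h.choose_spec]
  · simp

/-- Tail bound. -/
lemma tail_bound {c M T lam δ : ℝ} (hc : 0 < c) (hT : 0 < T) (hM : 0 ≤ M) (hδ : 0 < δ)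
    {A : ℕ → ℝ} (hA : ∀ n, |A n| ≤ M) (N : ℕ)
    (hN : ∀ n : ℕ, N ≤ n → lam + δ ≤ c * (n : ℝ) ^ 2) :
    ∀ t : ℝ, T ≤ t →
      Real.exp (lam * t) * |∑' n : ℕ, A (n + N) * Real.exp (-(c * ((n + N : ℕ) : ℝ) ^ 2) * t)|
        ≤ (M * Real.exp (lam * T) * (∑' n : ℕ, Real.exp (-(c * (n : ℝ) ^ 2) * T)))
            * Real.exp (-δ * (t - T)) := by
  intro t ht
  have ht0 : 0 < t := lt_of_lt_of_le hT ht
  set K : ℝ := M * Real.exp (lam * T - δ * (t - T) - lam * t) with hKdef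
  have hterm : ∀ n : ℕ,
      ‖A (n + N) * Real.exp (-(c * ((n + N : ℕ) : ℝ) ^ 2) * t)‖
        ≤ K * Real.exp (-(c * (n : ℝ) ^ 2) * T) := by
    intro n
    set q : ℝ := c * ((n + N : ℕ) : ℝ) ^ 2 with hqdef
    have hq1 : lam + δ ≤ q := hN (n + N) (Nat.le_add_left N n)
    have hq2 : c * (n : ℝ) ^ 2 ≤ q := by
      have h' : ((n : ℕ) : ℝ) ≤ ((n + N : ℕ) : ℝ) := by exact_mod_cast Nat.le_add_right n N
      have hn0 : (0:ℝ) ≤ (n : ℝ) := Nat.cast_nonneg n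
      rw [hqdef]
      exact mul_le_mul_of_nonneg_left (pow_le_pow_left₀ hn0 h' 2) hc.le
    rw [norm_mul, Real.norm_eq_abs, Real.norm_eq_abs, Real.abs_exp, hKdef, mul_assoc,
      ← Real.exp_add]
    have hexp : -q * t ≤ lam * T - δ * (t - T) - lam * t + -(c * (n : ℝ) ^ 2) * T := by
      nlinarith [mul_nonneg (sub_nonneg.2 ht) (by linarith : (0:ℝ) ≤ q - lam - δ),
        mul_nonneg (by linarith : (0:ℝ) ≤ q - c * (n : ℝ) ^ 2) hT.le]
    calc |A (n + N)| * Real.exp (-q * t) ≤ M * Real.exp (-q * t) :=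
          mul_le_mul_of_nonneg_right (hA _) (Real.exp_pos _).le
      _ ≤ M * Real.exp (lam * T - δ * (t - T) - lam * t + -(c * (n : ℝ) ^ 2) * T) :=
          mul_le_mul_of_nonneg_left (Real.exp_le_exp.2 hexp) hM
  have hKpos : 0 ≤ K := by positivity
  have hsumv : Summable fun n : ℕ => K * Real.exp (-(c * (n : ℝ) ^ 2) * T) :=
    (summable_exp_neg_sq hc hT).mul_left K
  have h1 : ‖∑' n : ℕ, A (n + N) * Real.exp (-(c * ((n + N : ℕ) : ℝ) ^ 2) * t)‖
      ≤ ∑' n : ℕ, K * Real.exp (-(c * (n : ℝ) ^ 2) * T) :=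
    tsum_of_norm_bounded hsumv.hasSum hterm
  rw [Real.norm_eq_abs] at h1
  rw [tsum_mul_left] at h1
  have h2 : Real.exp (lam * t) * |∑' n : ℕ, A (n + N) * Real.exp (-(c * ((n + N : ℕ) : ℝ) ^ 2) * t)|
      ≤ Real.exp (lam * t) * (K * ∑' n : ℕ, Real.exp (-(c * (n : ℝ) ^ 2) * T)) :=
    mul_le_mul_of_nonneg_left h1 (Real.exp_pos _).le
  refine h2.trans (le_of_eq ?_)
  rw [hKdef]
  have e1 : Real.exp (lam * t) * Real.exp (lam * T - δ * (t - T) - lam * t)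
      = Real.exp (lam * T) * Real.exp (-δ * (t - T)) := by
    rw [← Real.exp_add, ← Real.exp_add]
    congr 1
    ring
  linear_combination (M * (∑' n : ℕ, Real.exp (-(c * (n : ℝ) ^ 2) * T))) * e1

/-- The key extraction lemma: if the two series agree for all `t ≥ T`,
then all combined fiber coefficients vanish. -/
lemma key {a b T M : ℝ} (ha : 0 < a) (hb : 0 < b) (hT : 0 < T) {C D : ℕ → ℝ}
    (hC : ∀ n, |C n| ≤ M) (hD : ∀ n, |D n| ≤ M)
    (heq : ∀ t : ℝ, T ≤ t →
      ∑' n : ℕ, C n * Real.exp (-(a * (n : ℝ) ^ 2) * t) =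
        ∑' n : ℕ, D n * Real.exp (-(b * (n : ℝ) ^ 2) * t)) :
    ∀ y : ℝ, gdiff a b C D y = 0 := by
  classical
  have hM : 0 ≤ M := le_trans (abs_nonneg _) (hC 0)
  by_contra hcon
  push_neg at hcon
  obtain ⟨y₀, hy₀⟩ := hcon
  -- nonzero fiber coefficients come from exponents
  have hrep : ∀ y : ℝ, gdiff a b C D y ≠ 0 →
      (∃ n : ℕ, a * (n : ℝ) ^ 2 = y) ∨ (∃ m : ℕ, b * (m : ℝ) ^ 2 = y) := by
    intro y hy
    by_contra h
    push_neg at h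
    obtain ⟨h1, h2⟩ := h
    unfold gdiff at hy
    rw [dif_neg (by simpa using h1), dif_neg (by simpa using h2)] at hy
    simp at hy
  obtain ⟨Na, hNa_le, hNa_gt⟩ := expcoeff_cross ha y₀
  obtain ⟨Nb, hNb_le, hNb_gt⟩ := expcoeff_cross hb y₀
  set W : Finset ℝ :=
    ((Finset.range Na).image (fun n : ℕ => a * (n : ℝ) ^ 2) ∪
      (Finset.range Nb).image (fun m : ℕ => b * (m : ℝ) ^ 2)).filter
      (fun y => gdiff a b C D y ≠ 0) with hWdef
  have hmemW : ∀ y : ℝ, gdiff a b C D y ≠ 0 → y ≤ y₀ → y ∈ W := by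
    intro y hy hyle
    rw [hWdef, Finset.mem_filter]
    refine ⟨?_, hy⟩
    rcases hrep y hy with ⟨n, hn⟩ | ⟨m, hm⟩
    · apply Finset.mem_union_left
      apply Finset.mem_image.2
      refine ⟨n, Finset.mem_range.2 ?_, hn⟩
      by_contra hge
      push_neg at hge
      exact absurd (hn ▸ hNa_gt n hge) (by linarith)
    · apply Finset.mem_union_right
      apply Finset.mem_image.2
      refine ⟨m, Finset.mem_range.2 ?_, hm⟩
      by_contra hge
      push_neg at hge
      exact absurd (hm ▸ hNb_gt m hge) (by linarith)
  have hWne : W.Nonempty := ⟨y₀, hmemW y₀ hy₀ le_rfl⟩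
  set lam : ℝ := W.min' hWne with hlamdef
  have hlamW : lam ∈ W := W.min'_mem hWne
  have hlamne : gdiff a b C D lam ≠ 0 := (Finset.mem_filter.1 hlamW).2
  have hmin : ∀ y : ℝ, gdiff a b C D y ≠ 0 → lam ≤ y := by
    intro y hy
    by_cases h : y ≤ y₀
    · exact W.min'_le y (hmemW y hy h)
    · push_neg at h
      exact le_trans (W.min'_le y₀ (hmemW y₀ hy₀ le_rfl)) h.le
  obtain ⟨N₁, hN₁_le, hN₁_gt⟩ := expcoeff_cross ha lam
  obtain ⟨N₂, hN₂_le, hN₂_gt⟩ := expcoeff_cross hb lam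
  set δ : ℝ := min (a * (N₁ : ℝ) ^ 2 - lam) (b * (N₂ : ℝ) ^ 2 - lam) with hδdef
  have hδ : 0 < δ := lt_min (by linarith [hN₁_gt N₁ le_rfl]) (by linarith [hN₂_gt N₂ le_rfl])
  have hN₁δ : ∀ n : ℕ, N₁ ≤ n → lam + δ ≤ a * (n : ℝ) ^ 2 := by
    intro n hn
    have h1 : a * (N₁ : ℝ) ^ 2 ≤ a * (n : ℝ) ^ 2 := (expcoeff_strictMono ha).monotone hn
    have h2 : δ ≤ a * (N₁ : ℝ) ^ 2 - lam := min_le_left _ _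
    linarith
  have hN₂δ : ∀ n : ℕ, N₂ ≤ n → lam + δ ≤ b * (n : ℝ) ^ 2 := by
    intro n hn
    have h1 : b * (N₂ : ℝ) ^ 2 ≤ b * (n : ℝ) ^ 2 := (expcoeff_strictMono hb).monotone hn
    have h2 : δ ≤ b * (N₂ : ℝ) ^ 2 - lam := min_le_right _ _
    linarith
  set e₀ : ℝ := gdiff a b C D lam with he₀def
  set A : ℝ → ℝ := fun t =>
    (∑ n ∈ Finset.range N₁, C n * Real.exp ((lam - a * (n : ℝ) ^ 2) * t)) -
      ∑ m ∈ Finset.range N₂, D m * Real.exp ((lam - b * (m : ℝ) ^ 2) * t) with hAdef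
  -- Claim 1 : A t = e₀ for every t
  have claim1 : ∀ t : ℝ, A t = e₀ := by
    intro t
    set Y : Finset ℝ := (Finset.range N₁).image (fun n : ℕ => a * (n : ℝ) ^ 2) ∪
      (Finset.range N₂).image (fun m : ℕ => b * (m : ℝ) ^ 2) with hYdef
    have hYle : ∀ y ∈ Y, y ≤ lam := by
      intro y hy
      rcases Finset.mem_union.1 hy with h | h
      · obtain ⟨n, hn, rfl⟩ := Finset.mem_image.1 h
        exact hN₁_le n (Finset.mem_range.1 hn)
      · obtain ⟨m, hm, rfl⟩ := Finset.mem_image.1 h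
        exact hN₂_le m (Finset.mem_range.1 hm)
    have hmaps1 : ∀ n ∈ Finset.range N₁, a * (n : ℝ) ^ 2 ∈ Y :=
      fun n hn => Finset.mem_union_left _ (Finset.mem_image_of_mem _ hn)
    have hmaps2 : ∀ m ∈ Finset.range N₂, b * (m : ℝ) ^ 2 ∈ Y :=
      fun m hm => Finset.mem_union_right _ (Finset.mem_image_of_mem _ hm)
    have hfib1 := Finset.sum_fiberwise_of_maps_to hmaps1
      (fun n => C n * Real.exp ((lam - a * (n : ℝ) ^ 2) * t))
    have hfib2 := Finset.sum_fiberwise_of_maps_to hmaps2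
      (fun m => D m * Real.exp ((lam - b * (m : ℝ) ^ 2) * t))
    rw [hAdef]
    simp only []
    rw [← hfib1, ← hfib2, ← Finset.sum_sub_distrib]
    have hstep : ∀ y ∈ Y,
        ((∑ n ∈ (Finset.range N₁).filter (fun n : ℕ => a * (n : ℝ) ^ 2 = y),
            (C n * Real.exp ((lam - a * (n : ℝ) ^ 2) * t))) -
          ∑ m ∈ (Finset.range N₂).filter (fun m : ℕ => b * (m : ℝ) ^ 2 = y),
            (D m * Real.exp ((lam - b * (m : ℝ) ^ 2) * t)))
        = gdiff a b C D y * Real.exp ((lam - y) * t) := by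
      intro y hy
      have hy1 : ∀ n : ℕ, a * (n : ℝ) ^ 2 = y → n < N₁ := by
        intro n hn
        by_contra hge
        push_neg at hge
        have := hN₁_gt n hge
        have := hYle y hy
        linarith [hn ▸ this]
      have hy2 : ∀ m : ℕ, b * (m : ℝ) ^ 2 = y → m < N₂ := by
        intro m hm
        by_contra hge
        push_neg at hge
        have := hN₂_gt m hge
        have := hYle y hy
        linarith [hm ▸ this]
      rw [fiber_sum ha N₁ y t lam hy1 C, fiber_sum hb N₂ y t lam hy2 D]
      unfold gdiff
      ring
    rw [Finset.sum_congr rfl hstep]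
    have hlamY : lam ∈ Y := by
      rcases hrep lam hlamne with ⟨n, hn⟩ | ⟨m, hm⟩
      · apply Finset.mem_union_left
        apply Finset.mem_image.2
        refine ⟨n, Finset.mem_range.2 ?_, hn⟩
        by_contra hge
        push_neg at hge
        exact absurd (hn ▸ hN₁_gt n hge) (lt_irrefl lam)
      · apply Finset.mem_union_right
        apply Finset.mem_image.2
        refine ⟨m, Finset.mem_range.2 ?_, hm⟩
        by_contra hge
        push_neg at hge
        exact absurd (hm ▸ hN₂_gt m hge) (lt_irrefl lam)
    rw [Finset.sum_eq_single_of_mem lam hlamY]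
    · rw [he₀def, sub_self, zero_mul, Real.exp_zero, mul_one]
    · intro y hy hne
      have : gdiff a b C D y = 0 := by
        by_contra h
        have h1 := hmin y h
        have h2 := hYle y hy
        exact hne (le_antisymm h2 h1)
      rw [this, zero_mul]
  -- Claim 2 : |e₀| is bounded by a decaying exponential
  set Cst : ℝ := M * Real.exp (lam * T) * (∑' n : ℕ, Real.exp (-(b * (n : ℝ) ^ 2) * T)) +
    M * Real.exp (lam * T) * (∑' n : ℕ, Real.exp (-(a * (n : ℝ) ^ 2) * T)) with hCstdef
  have claim2 : ∀ t : ℝ, T ≤ t → |e₀| ≤ Cst * Real.exp (-δ * (t - T)) := by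
    intro t ht
    have ht0 : 0 < t := lt_of_lt_of_le hT ht
    have hsumC : Summable fun n : ℕ => C n * Real.exp (-(a * (n : ℝ) ^ 2) * t) :=
      summable_term ha ht0 hC
    have hsumD : Summable fun n : ℕ => D n * Real.exp (-(b * (n : ℝ) ^ 2) * t) :=
      summable_term hb ht0 hD
    have hsplitC := Summable.sum_add_tsum_nat_add N₁ hsumC
    have hsplitD := Summable.sum_add_tsum_nat_add N₂ hsumD
    -- A t in terms of tails
    have hexpand : A t = Real.exp (lam * t) *
        ((∑' n : ℕ, D (n + N₂) * Real.exp (-(b * ((n + N₂ : ℕ) : ℝ) ^ 2) * t)) -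
          ∑' n : ℕ, C (n + N₁) * Real.exp (-(a * ((n + N₁ : ℕ) : ℝ) ^ 2) * t)) := by
      have hPC : (∑ n ∈ Finset.range N₁, C n * Real.exp ((lam - a * (n : ℝ) ^ 2) * t))
          = Real.exp (lam * t) * ∑ n ∈ Finset.range N₁, C n * Real.exp (-(a * (n : ℝ) ^ 2) * t) := by
        rw [Finset.mul_sum]
        apply Finset.sum_congr rfl
        intro n _
        rw [show (lam - a * (n : ℝ) ^ 2) * t = lam * t + -(a * (n : ℝ) ^ 2) * t by ring,
          Real.exp_add]
        ring
      have hPD : (∑ m ∈ Finset.range N₂, D m * Real.exp ((lam - b * (m : ℝ) ^ 2) * t))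
          = Real.exp (lam * t) * ∑ m ∈ Finset.range N₂, D m * Real.exp (-(b * (m : ℝ) ^ 2) * t) := by
        rw [Finset.mul_sum]
        apply Finset.sum_congr rfl
        intro m _
        rw [show (lam - b * (m : ℝ) ^ 2) * t = lam * t + -(b * (m : ℝ) ^ 2) * t by ring,
          Real.exp_add]
        ring
      rw [hAdef]
      simp only []
      rw [hPC, hPD]
      have h1 : (∑ n ∈ Finset.range N₁, C n * Real.exp (-(a * (n : ℝ) ^ 2) * t))
          = (∑' n : ℕ, C n * Real.exp (-(a * (n : ℝ) ^ 2) * t)) -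
            ∑' n : ℕ, C (n + N₁) * Real.exp (-(a * ((n + N₁ : ℕ) : ℝ) ^ 2) * t) := by
        rw [← hsplitC]; ring
      have h2 : (∑ m ∈ Finset.range N₂, D m * Real.exp (-(b * (m : ℝ) ^ 2) * t))
          = (∑' n : ℕ, D n * Real.exp (-(b * (n : ℝ) ^ 2) * t)) -
            ∑' n : ℕ, D (n + N₂) * Real.exp (-(b * ((n + N₂ : ℕ) : ℝ) ^ 2) * t) := by
        rw [← hsplitD]; ring
      rw [h1, h2, heq t ht]
      ring
    have hbC := tail_bound ha hT hM hδ hC N₁ hN₁δ t ht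
    have hbD := tail_bound hb hT hM hδ hD N₂ hN₂δ t ht
    rw [← claim1 t, hexpand]
    rw [abs_mul, Real.abs_exp]
    calc Real.exp (lam * t) *
        |(∑' n : ℕ, D (n + N₂) * Real.exp (-(b * ((n + N₂ : ℕ) : ℝ) ^ 2) * t)) -
          ∑' n : ℕ, C (n + N₁) * Real.exp (-(a * ((n + N₁ : ℕ) : ℝ) ^ 2) * t)|
        ≤ Real.exp (lam * t) *
          (|∑' n : ℕ, D (n + N₂) * Real.exp (-(b * ((n + N₂ : ℕ) : ℝ) ^ 2) * t)| +
            |∑' n : ℕ, C (n + N₁) * Real.exp (-(a * ((n + N₁ : ℕ) : ℝ) ^ 2) * t)|) :=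
          mul_le_mul_of_nonneg_left (abs_sub _ _) (Real.exp_pos _).le
      _ ≤ Cst * Real.exp (-δ * (t - T)) := by
          rw [mul_add, hCstdef, add_mul]
          exact add_le_add hbD hbC
  -- conclusion by letting t → ∞
  have htend : Tendsto (fun t : ℝ => Cst * Real.exp (-δ * (t - T))) atTop (nhds 0) := by
    have h1 : Tendsto (fun t : ℝ => δ * (t - T)) atTop atTop := by
      apply Tendsto.const_mul_atTop hδ
      exact tendsto_atTop_add_const_right _ (-T) tendsto_id
    have h2 : Tendsto (fun t : ℝ => -δ * (t - T)) atTop atBot := by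
      simp only [neg_mul]
      exact tendsto_neg_atBot_iff.2 h1
    have h3 : Tendsto (fun t : ℝ => Real.exp (-δ * (t - T))) atTop (nhds 0) :=
      Real.tendsto_exp_atBot.comp h2
    simpa using h3.const_mul Cst
  have habs : |e₀| ≤ 0 := by
    apply ge_of_tendsto htend
    filter_upwards [eventually_ge_atTop T] with t ht
    exact claim2 t ht
  exact hlamne (abs_nonpos_iff.1 habs)

/-- Extract the matching statement from the vanishing of fiber coefficients. -/
lemma extract {a b : ℝ} (ha : 0 < a) (hb : 0 < b) {C D : ℕ → ℝ}
    (hg : ∀ y : ℝ, gdiff a b C D y = 0) :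
    ∀ n : ℕ, C n ≠ 0 → ∃ m : ℕ, D m = C n ∧ b * (m : ℝ) ^ 2 = a * (n : ℝ) ^ 2 := by
  classical
  intro n hn
  have h := hg (a * (n : ℝ) ^ 2)
  unfold gdiff at h
  have h1 : ∃ k : ℕ, a * (k : ℝ) ^ 2 = a * (n : ℝ) ^ 2 := ⟨n, rfl⟩
  rw [dif_pos h1] at h
  have hch : h1.choose = n := expcoeff_injective ha h1.choose_spec
  rw [hch] at h
  by_cases h2 : ∃ m : ℕ, b * (m : ℝ) ^ 2 = a * (n : ℝ) ^ 2
  · rw [dif_pos h2] at h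
    exact ⟨h2.choose, by linarith, h2.choose_spec⟩
  · rw [dif_neg h2] at h
    exact absurd (by linarith : C n = 0) hn

end Key

/-- If two Dirichlet series with exponents `α n² π²` and `β n² π²` agree on an
interval, then the nonzero coefficient–exponent pairs coincide. -/
theorem dirichlet_series_pairs_coincide (α β T₁ T₂ : ℝ) (hα : 0 < α) (hβ : 0 < β)
    (hT₁ : 0 < T₁) (hT : T₁ < T₂) (C D : ℕ → ℝ)
    (hCsum : Summable fun n : ℕ => (C n) ^ 2) (hDsum : Summable fun n : ℕ => (D n) ^ 2)
    (heq : ∀ t ∈ Set.Icc T₁ T₂,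
      ∑' n : ℕ, C n * Real.exp (-(α * n ^ 2 * π ^ 2) * t) =
        ∑' n : ℕ, D n * Real.exp (-(β * n ^ 2 * π ^ 2) * t)) :
    (∀ n : ℕ, C n ≠ 0 → ∃ m : ℕ, D m = C n ∧ β * m ^ 2 = α * n ^ 2) ∧
    (∀ m : ℕ, D m ≠ 0 → ∃ n : ℕ, C n = D m ∧ α * n ^ 2 = β * m ^ 2) := by
  have hπ2 : (0:ℝ) < π ^ 2 := by positivity
  set a : ℝ := α * π ^ 2 with hadef
  set b : ℝ := β * π ^ 2 with hbdef
  have ha : 0 < a := by positivity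
  have hb : 0 < b := by positivity
  obtain ⟨M₁, hM₁0, hM₁⟩ := bound_of_sq_summable hCsum
  obtain ⟨M₂, hM₂0, hM₂⟩ := bound_of_sq_summable hDsum
  set M : ℝ := max M₁ M₂ with hMdef
  have hC : ∀ n, |C n| ≤ M := fun n => le_trans (hM₁ n) (le_max_left _ _)
  have hD : ∀ n, |D n| ≤ M := fun n => le_trans (hM₂ n) (le_max_right _ _)
  have heq' : ∀ t ∈ Set.Icc T₁ T₂,
      ∑' n : ℕ, C n * Real.exp (-(a * (n : ℝ) ^ 2) * t) =
        ∑' n : ℕ, D n * Real.exp (-(b * (n : ℝ) ^ 2) * t) := by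
    intro t ht
    have h1 : ∀ n : ℕ, C n * Real.exp (-(a * (n : ℝ) ^ 2) * t)
        = C n * Real.exp (-(α * (n : ℝ) ^ 2 * π ^ 2) * t) := by
      intro n
      rw [hadef, show -(α * π ^ 2 * (n : ℝ) ^ 2) * t = -(α * (n : ℝ) ^ 2 * π ^ 2) * t by ring]
    have h2 : ∀ n : ℕ, D n * Real.exp (-(b * (n : ℝ) ^ 2) * t)
        = D n * Real.exp (-(β * (n : ℝ) ^ 2 * π ^ 2) * t) := by
      intro n
      rw [hbdef, show -(β * π ^ 2 * (n : ℝ) ^ 2) * t = -(β * (n : ℝ) ^ 2 * π ^ 2) * t by ring]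
    rw [tsum_congr h1, tsum_congr h2]
    exact heq t ht
  have heqT := series_eq_of_eq_on_Icc ha hb hT₁ hT hC hD heq'
  have hg : ∀ y : ℝ, gdiff a b C D y = 0 := key ha hb hT₁ hC hD heqT
  have hg' : ∀ y : ℝ, gdiff b a D C y = 0 := fun y => by rw [gdiff_swap, hg y, neg_zero]
  constructor
  · intro n hn
    obtain ⟨m, hm1, hm2⟩ := extract ha hb hg n hn
    refine ⟨m, hm1, ?_⟩
    have h3 : β * (m : ℝ) ^ 2 * π ^ 2 = α * (n : ℝ) ^ 2 * π ^ 2 := by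
      rw [hadef, hbdef] at hm2
      linear_combination hm2
    exact mul_right_cancel₀ (ne_of_gt hπ2) h3
  · intro m hm
    obtain ⟨n, hn1, hn2⟩ := extract hb ha hg' m hm
    refine ⟨n, hn1, ?_⟩
    have h3 : α * (n : ℝ) ^ 2 * π ^ 2 = β * (m : ℝ) ^ 2 * π ^ 2 := by
      rw [hadef, hbdef] at hn2
      linear_combination hn2
    exact mul_right_cancel₀ (ne_of_gt hπ2) h3
end

section
/- Let θ > 0 and L ≥ 2 a natural number. Then S₁ = Σ_{i=1}^{L-1} i e^{-θ i} ≤ M_{θ,L} + ∫₁^{L-1} x e^{-θx} dx, where M_{θ,L} equals e^{-θ} if θ ≥ 1, equals (2/θ)e^{-1} if 1/(L-1) < θ < 1, and equals (L-1)e^{-(L-1)θ} if 0 < θ ≤ 1/(L-1). -/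
open Real

noncomputable def fe (θ : ℝ) : ℝ → ℝ := fun x => x * Real.exp (-θ * x)

lemma fe_cont (θ : ℝ) : Continuous (fe θ) := by
  unfold fe; fun_prop

lemma fe_hasDerivAt (θ x : ℝ) :
    HasDerivAt (fe θ) ((1 - θ * x) * Real.exp (-θ * x)) x := by
  have h1 : HasDerivAt (fun x : ℝ => -θ * x) (-θ) x := by
    simpa using (hasDerivAt_id x).const_mul (-θ)
  have h2 : HasDerivAt (fun x : ℝ => Real.exp (-θ * x)) (Real.exp (-θ * x) * (-θ)) x :=
    h1.exp
  have : HasDerivAt (fe θ) _ x := (hasDerivAt_id x).mul h2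
  convert this using 1
  simp only [id]
  ring

lemma fe_deriv (θ x : ℝ) : deriv (fe θ) x = (1 - θ * x) * Real.exp (-θ * x) :=
  (fe_hasDerivAt θ x).deriv

lemma fe_mono (θ : ℝ) (hθ : 0 < θ) : MonotoneOn (fe θ) (Set.Iic (1/θ)) := by
  apply monotoneOn_of_deriv_nonneg (convex_Iic _) (fe_cont θ).continuousOn
  · intro x hx
    exact (fe_hasDerivAt θ x).differentiableAt.differentiableWithinAt
  · intro x hx
    rw [interior_Iic] at hx
    rw [fe_deriv]
    have h1 : θ * x < 1 := by
      calc θ * x < θ * (1/θ) := mul_lt_mul_of_pos_left hx.out hθ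
        _ = 1 := by field_simp
    have := Real.exp_pos (-θ * x)
    nlinarith

lemma fe_anti (θ : ℝ) (hθ : 0 < θ) : AntitoneOn (fe θ) (Set.Ici (1/θ)) := by
  apply antitoneOn_of_deriv_nonpos (convex_Ici _) (fe_cont θ).continuousOn
  · intro x hx
    exact (fe_hasDerivAt θ x).differentiableAt.differentiableWithinAt
  · intro x hx
    rw [interior_Ici] at hx
    rw [fe_deriv]
    have h1 : 1 < θ * x := by
      calc (1:ℝ) = θ * (1/θ) := by field_simp
        _ < θ * x := mul_lt_mul_of_pos_left hx.out hθ
    have := Real.exp_pos (-θ * x)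
    nlinarith

lemma fe_step_inc (θ : ℝ) (hθ : 0 < θ) (a : ℝ) (ha : a + 1 ≤ 1/θ) :
    fe θ a ≤ ∫ x in a..(a+1), fe θ x := by
  have h0 : (∫ _x in a..(a+1), fe θ a) = fe θ a := by simp
  rw [← h0]
  apply intervalIntegral.integral_mono_on (by linarith)
    intervalIntegrable_const ((fe_cont θ).intervalIntegrable a (a+1))
  intro x hx
  exact fe_mono θ hθ (by simp only [Set.mem_Iic]; linarith) (by simp only [Set.mem_Iic]; linarith [hx.2]) hx.1

lemma fe_step_dec (θ : ℝ) (hθ : 0 < θ) (b : ℝ) (hb : 1/θ ≤ b - 1) :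
    fe θ b ≤ ∫ x in (b-1)..b, fe θ x := by
  have h0 : (∫ _x in (b-1)..b, fe θ b) = fe θ b := by
    simp
  rw [← h0]
  apply intervalIntegral.integral_mono_on (by linarith)
    intervalIntegrable_const ((fe_cont θ).intervalIntegrable _ _)
  intro x hx
  exact fe_anti θ hθ (by simp only [Set.mem_Ici]; linarith [hx.1]) (by simp only [Set.mem_Ici]; linarith) hx.2

lemma fe_global (θ : ℝ) (hθ : 0 < θ) (x : ℝ) : fe θ x ≤ 1/θ * Real.exp (-1) := by
  unfold fe
  rcases le_or_gt x 0 with h | h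
  · have : x * Real.exp (-θ * x) ≤ 0 :=
      mul_nonpos_of_nonpos_of_nonneg h (Real.exp_pos _).le
    have : (0:ℝ) < 1/θ * Real.exp (-1) := by positivity
    linarith
  · have key : θ * x ≤ Real.exp (θ * x - 1) := by
      have := Real.add_one_le_exp (θ * x - 1)
      linarith
    have hE : Real.exp (θ * x - 1) = Real.exp (θ * x) * Real.exp (-1) := by
      rw [← Real.exp_add]; ring_nf
    have hinv : Real.exp (-θ * x) = (Real.exp (θ * x))⁻¹ := by
      rw [← Real.exp_neg]; ring_nf
    have hEpos := Real.exp_pos (θ * x)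
    rw [hE] at key
    have h2 : θ * x * Real.exp (-θ * x) ≤ Real.exp (-1) := by
      rw [hinv]
      calc θ * x * (Real.exp (θ * x))⁻¹
          ≤ (Real.exp (θ * x) * Real.exp (-1)) * (Real.exp (θ * x))⁻¹ := by
            apply mul_le_mul_of_nonneg_right key (by positivity)
        _ = Real.exp (-1) := by field_simp
    have h3 : x * Real.exp (-θ * x) = θ * x * Real.exp (-θ * x) / θ := by
      field_simp
    rw [h3, show 1/θ * Real.exp (-1) = Real.exp (-1)/θ by ring]
    gcongr

lemma sum_inc (θ : ℝ) (hθ : 0 < θ) (a : ℝ) (n : ℕ) (h : a + n ≤ 1/θ) :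
    ∑ k ∈ Finset.range n, fe θ (a + k) ≤ ∫ x in a..(a + n), fe θ x := by
  calc ∑ k ∈ Finset.range n, fe θ (a + k)
      ≤ ∑ k ∈ Finset.range n, ∫ x in (a + k)..(a + (k+1 : ℕ)), fe θ x := by
        apply Finset.sum_le_sum
        intro k hk
        have hk' : k < n := Finset.mem_range.mp hk
        have hc : a + ((k+1 : ℕ) : ℝ) = (a + k) + 1 := by push_cast; ring
        rw [hc]
        apply fe_step_inc θ hθ
        have : ((k:ℝ) + 1) ≤ (n : ℝ) := by exact_mod_cast hk'
        linarith
    _ = ∫ x in (a + (0:ℕ))..(a + n), fe θ x :=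
        intervalIntegral.sum_integral_adjacent_intervals
          (fun k _ => (fe_cont θ).intervalIntegrable _ _)
    _ = ∫ x in a..(a + n), fe θ x := by norm_num

lemma sum_dec (θ : ℝ) (hθ : 0 < θ) (a : ℝ) (n : ℕ) (h : 1/θ ≤ a) :
    ∑ k ∈ Finset.range n, fe θ (a + k + 1) ≤ ∫ x in a..(a + n), fe θ x := by
  calc ∑ k ∈ Finset.range n, fe θ (a + k + 1)
      ≤ ∑ k ∈ Finset.range n, ∫ x in (a + k)..(a + (k+1 : ℕ)), fe θ x := by
        apply Finset.sum_le_sum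
        intro k hk
        have hstep := fe_step_dec θ hθ (a + k + 1)
          (by have : (0:ℝ) ≤ k := Nat.cast_nonneg k; linarith)
        have he : (a + ↑k + 1) - 1 = a + (k:ℝ) := by ring
        rw [he] at hstep
        have h2 : a + ((k+1 : ℕ) : ℝ) = a + ↑k + 1 := by push_cast; ring
        rw [h2]
        exact hstep
    _ = ∫ x in (a + (0:ℕ))..(a + n), fe θ x :=
        intervalIntegral.sum_integral_adjacent_intervals
          (fun k _ => (fe_cont θ).intervalIntegrable _ _)
    _ = ∫ x in a..(a + n), fe θ x := by norm_num

/-- Bound for `S₁ = Σ_{i=1}^{L-1} i e^(-θi)` by `M_{θ,L} + ∫₁^{L-1} x e^(-θx) dx`. -/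
theorem sum_ie_bound (θ : ℝ) (hθ : 0 < θ) (L : ℕ) (hL : 2 ≤ L) :
    ∑ i ∈ Finset.Icc 1 (L - 1), (i : ℝ) * Real.exp (-θ * i) ≤
      (if 1 ≤ θ then Real.exp (-θ)
        else if 1 / ((L : ℝ) - 1) < θ then 2 / θ * Real.exp (-1)
        else ((L : ℝ) - 1) * Real.exp (-((L : ℝ) - 1) * θ)) +
      ∫ x in (1:ℝ)..((L : ℝ) - 1), x * Real.exp (-θ * x) := by
  set N := L - 1 with hN
  have hN1 : 1 ≤ N := by omega
  have hNcast : ((N:ℕ):ℝ) = (L:ℝ) - 1 := by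
    rw [hN]; push_cast [Nat.cast_sub (by omega : 1 ≤ L)]; ring
  show ∑ i ∈ Finset.Icc 1 N, fe θ (i:ℝ) ≤
      (if 1 ≤ θ then Real.exp (-θ)
        else if 1 / ((L : ℝ) - 1) < θ then 2 / θ * Real.exp (-1)
        else ((L : ℝ) - 1) * Real.exp (-((L : ℝ) - 1) * θ)) +
      ∫ x in (1:ℝ)..((L : ℝ) - 1), fe θ x
  rw [← hNcast]
  have hNR : (1:ℝ) ≤ ((N:ℕ):ℝ) := by exact_mod_cast hN1
  split_ifs with h1 h2
  · -- θ ≥ 1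
    obtain ⟨P, hP⟩ : ∃ P, N = P + 1 := ⟨N - 1, by omega⟩
    have e0 : ∑ i ∈ Finset.Icc 1 N, fe θ (i:ℝ)
        = ∑ k ∈ Finset.range N, fe θ ((1 + k : ℕ) : ℝ) := by
      rw [← Finset.Ico_add_one_right_eq_Icc, Finset.sum_Ico_eq_sum_range]
      have : N + 1 - 1 = N := by omega
      rw [this]
    have e1 : ∑ k ∈ Finset.range N, fe θ ((1 + k : ℕ) : ℝ)
        = (∑ k ∈ Finset.range P, fe θ ((1 + (k + 1) : ℕ) : ℝ)) + fe θ ((1 + 0 : ℕ) : ℝ) := by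
      rw [hP, Finset.sum_range_succ']
    have e2 : ∑ k ∈ Finset.range P, fe θ ((1 + (k + 1) : ℕ) : ℝ)
        = ∑ k ∈ Finset.range P, fe θ ((1:ℝ) + k + 1) :=
      Finset.sum_congr rfl fun k _ => by congr 1; push_cast; ring
    have b := sum_dec θ hθ 1 P (by rw [div_le_one hθ]; exact h1)
    have hend : (1:ℝ) + (P:ℝ) = ((N:ℕ):ℝ) := by push_cast [hP]; ring
    rw [hend] at b
    have hfe1 : fe θ ((1 + 0 : ℕ) : ℝ) = Real.exp (-θ) := by
      norm_num [fe]
    rw [e0, e1, e2, hfe1]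
    linarith
  · -- middle case: θ < 1 and 1/N < θ
    push_neg at h1
    have hNpos : (0:ℝ) < ((N:ℕ):ℝ) := by linarith
    have h2' : 1 < θ * ((N:ℕ):ℝ) := by
      have := (div_lt_iff₀ hNpos).mp h2
      linarith
    have hinvN : 1/θ < ((N:ℕ):ℝ) := by
      rw [div_lt_iff₀ hθ]; nlinarith
    have h1θ : 1 < 1/θ := by rw [lt_div_iff₀ hθ]; linarith
    set m := Nat.floor (1/θ) with hm
    have hm1 : 1 ≤ m := by
      apply Nat.le_floor; push_cast; linarith
    have hmle : (m:ℝ) ≤ 1/θ := Nat.floor_le (by positivity)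
    have hmub : 1/θ < (m:ℝ) + 1 := Nat.lt_floor_add_one _
    have hmN : m + 1 ≤ N := by
      have hlt : (m:ℝ) < ((N:ℕ):ℝ) := lt_of_le_of_lt hmle hinvN
      have : m < N := by exact_mod_cast hlt
      omega
    obtain ⟨q, hq⟩ : ∃ q, m = q + 1 := ⟨m - 1, by omega⟩
    rw [show Finset.Icc 1 N = Finset.Ioc 0 N from Finset.Icc_add_one_left_eq_Ioc 0 N]
    have s1 := Finset.sum_Ioc_consecutive (fun i : ℕ => fe θ (i:ℝ))
      (show 0 ≤ m + 1 by omega) (show m + 1 ≤ N by omega)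
    have s2 := Finset.sum_Ioc_consecutive (fun i : ℕ => fe θ (i:ℝ))
      (show 0 ≤ q by omega) (show q ≤ m + 1 by omega)
    have s3 : ∑ i ∈ Finset.Ioc q (m+1), fe θ (i:ℝ)
        = fe θ (m:ℝ) + fe θ ((m:ℝ) + 1) := by
      rw [hq]
      rw [Finset.sum_Ioc_succ_top (by omega : q ≤ q + 1),
        Finset.sum_Ioc_succ_top (le_refl q), Finset.Ioc_self, Finset.sum_empty]
      push_cast
      ring
    have b1 : ∑ i ∈ Finset.Ioc 0 q, fe θ (i:ℝ) ≤ ∫ x in (1:ℝ)..(m:ℝ), fe θ x := by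
      have e1 : ∑ i ∈ Finset.Ioc 0 q, fe θ (i:ℝ)
          = ∑ k ∈ Finset.range q, fe θ ((1:ℝ) + k) := by
        rw [← Finset.Icc_add_one_left_eq_Ioc 0 q, ← Finset.Ico_add_one_right_eq_Icc, Finset.sum_Ico_eq_sum_range]
        have : q + 1 - (0 + 1) = q := by omega
        rw [this]
        exact Finset.sum_congr rfl fun k _ => by congr 1; push_cast; ring
      have hb := sum_inc θ hθ 1 q (by
        have : (m:ℝ) = (q:ℝ) + 1 := by exact_mod_cast hq
        linarith)
      have hend : (1:ℝ) + (q:ℝ) = (m:ℝ) := by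
        have : (m:ℝ) = (q:ℝ) + 1 := by exact_mod_cast hq
        linarith
      rw [hend] at hb
      rw [e1]
      exact hb
    have b2 : fe θ (m:ℝ) + fe θ ((m:ℝ) + 1) ≤ 2/θ * Real.exp (-1) := by
      have g1 := fe_global θ hθ (m:ℝ)
      have g2 := fe_global θ hθ ((m:ℝ) + 1)
      have he : 2/θ * Real.exp (-1) = 1/θ * Real.exp (-1) + 1/θ * Real.exp (-1) := by ring
      rw [he]
      linarith
    have b3 : ∑ i ∈ Finset.Ioc (m+1) N, fe θ (i:ℝ)
        ≤ ∫ x in ((m:ℝ)+1)..((N:ℕ):ℝ), fe θ x := by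
      have e3 : ∑ i ∈ Finset.Ioc (m+1) N, fe θ (i:ℝ)
          = ∑ k ∈ Finset.range (N - (m+1)), fe θ (((m:ℝ)+1) + k + 1) := by
        rw [← Finset.Icc_add_one_left_eq_Ioc (m+1) N, ← Finset.Ico_add_one_right_eq_Icc, Finset.sum_Ico_eq_sum_range]
        have : N + 1 - (m + 1 + 1) = N - (m+1) := by omega
        rw [this]
        exact Finset.sum_congr rfl fun k _ => by congr 1; push_cast; ring
      have hb := sum_dec θ hθ ((m:ℝ)+1) (N - (m+1)) (le_of_lt hmub)
      have hend : ((m:ℝ)+1) + ((N - (m+1) : ℕ) : ℝ) = ((N:ℕ):ℝ) := by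
        push_cast [Nat.cast_sub hmN]
        ring
      rw [hend] at hb
      rw [e3]
      exact hb
    have i1 : (∫ x in (1:ℝ)..(m:ℝ), fe θ x) + (∫ x in (m:ℝ)..((m:ℝ)+1), fe θ x)
        = ∫ x in (1:ℝ)..((m:ℝ)+1), fe θ x :=
      intervalIntegral.integral_add_adjacent_intervals
        ((fe_cont θ).intervalIntegrable _ _) ((fe_cont θ).intervalIntegrable _ _)
    have i2 : (∫ x in (1:ℝ)..((m:ℝ)+1), fe θ x) + (∫ x in ((m:ℝ)+1)..((N:ℕ):ℝ), fe θ x)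
        = ∫ x in (1:ℝ)..((N:ℕ):ℝ), fe θ x :=
      intervalIntegral.integral_add_adjacent_intervals
        ((fe_cont θ).intervalIntegrable _ _) ((fe_cont θ).intervalIntegrable _ _)
    have hm0 : (0:ℝ) ≤ (m:ℝ) := Nat.cast_nonneg m
    have mid : 0 ≤ ∫ x in (m:ℝ)..((m:ℝ)+1), fe θ x := by
      apply intervalIntegral.integral_nonneg (by linarith)
      intro x hx
      have hx0 : 0 ≤ x := le_trans hm0 hx.1
      unfold fe
      positivity
    linarith [s1, s2, s3, b1, b2, b3, i1, i2, mid]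
  · -- θ ≤ 1/N
    push_neg at h1 h2
    have hNpos : (0:ℝ) < ((N:ℕ):ℝ) := by linarith
    have hNle : ((N:ℕ):ℝ) ≤ 1/θ := by
      rw [le_div_iff₀ hθ]
      have := (le_div_iff₀ hNpos).mp h2
      nlinarith
    obtain ⟨P, hP⟩ : ∃ P, N = P + 1 := ⟨N - 1, by omega⟩
    have e0 : ∑ i ∈ Finset.Icc 1 N, fe θ (i:ℝ)
        = (∑ i ∈ Finset.Icc 1 P, fe θ (i:ℝ)) + fe θ ((P+1 : ℕ) : ℝ) := by
      rw [hP, Finset.sum_Icc_succ_top (by omega : 1 ≤ P + 1)]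
    have e1 : ∑ i ∈ Finset.Icc 1 P, fe θ (i:ℝ)
        = ∑ k ∈ Finset.range P, fe θ ((1:ℝ) + k) := by
      rw [← Finset.Ico_add_one_right_eq_Icc, Finset.sum_Ico_eq_sum_range]
      have : P + 1 - 1 = P := by omega
      rw [this]
      exact Finset.sum_congr rfl fun k _ => by congr 1; push_cast; ring
    have hb := sum_inc θ hθ 1 P (by
      have : (1:ℝ) + (P:ℝ) = ((N:ℕ):ℝ) := by push_cast [hP]; ring
      linarith)
    have hend : (1:ℝ) + (P:ℝ) = ((N:ℕ):ℝ) := by push_cast [hP]; ring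
    rw [hend] at hb
    have hM : fe θ ((P+1 : ℕ) : ℝ) = ((N:ℕ):ℝ) * Real.exp (-((N:ℕ):ℝ) * θ) := by
      have : ((P+1 : ℕ) : ℝ) = ((N:ℕ):ℝ) := by push_cast [hP]; ring
      rw [this]
      unfold fe
      ring_nf
    rw [e0, e1, hM]
    linarith
end

section
/- Let N > 9 be an integer, L = ⌈N/3⌉ (so L ≥ 4), and θ > 0. Then M_{θ,N} := (1/θ) e^{-θ(N-2)} [ (L+1−1/θ) e^{θL} + 1/θ − 1 ] < (1/θ²) e^{-θ(L-1)} + (L/θ) e^{-θ(N-L-2)}. -/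
open Real

/-- For `N > 9`, `L = ⌈N/3⌉` and `θ > 0`:
`M_{θ,N} < (1/θ²)e^(-θ(L-1)) + (L/θ)e^(-θ(N-L-2))`. -/
theorem M_theta_N_bound (N L : ℕ) (hN : 9 < N) (hL : L = (N + 2) / 3)
    (θ : ℝ) (hθ : 0 < θ) :
    1 / θ * Real.exp (-θ * ((N : ℝ) - 2)) *
        (((L : ℝ) + 1 - 1 / θ) * Real.exp (θ * L) + 1 / θ - 1) <
      1 / θ ^ 2 * Real.exp (-θ * ((L : ℝ) - 1)) +
        (L : ℝ) / θ * Real.exp (-θ * ((N : ℝ) - (L : ℝ) - 2)) := by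
  have hLN : 2 * L + 2 ≤ N := by omega
  have hL1 : 1 ≤ L := by omega
  have hm : (1:ℝ) ≤ (N:ℝ) - 2*(L:ℝ) - 1 := by
    have h := (Nat.cast_le (α := ℝ)).mpr hLN
    push_cast at h
    linarith
  set A := Real.exp (-θ * ((N : ℝ) - 2)) with hA
  set B := Real.exp (-θ * ((L : ℝ) - 1)) with hB
  set C := Real.exp (-θ * ((N : ℝ) - (L:ℝ) - 2)) with hC
  have hApos : 0 < A := Real.exp_pos _
  have hBpos : 0 < B := Real.exp_pos _
  have hCpos : 0 < C := Real.exp_pos _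
  have hCA : C = A * Real.exp (θ * L) := by
    rw [hA, hC, ← Real.exp_add]; ring_nf
  have hBC : B = C * Real.exp (θ * ((N:ℝ) - 2*(L:ℝ) - 1)) := by
    rw [hB, hC, ← Real.exp_add]; ring_nf
  have hL0 : (0:ℝ) < L := by exact_mod_cast hL1
  have hEL : 1 < Real.exp (θ * L) := by
    have := Real.exp_lt_exp.mpr (show (0:ℝ) < θ*L from mul_pos hθ hL0)
    simpa using this
  have key : (θ - 1) * (C - A) < B := by
    rcases le_or_gt θ 1 with h1 | h1
    · have hAC : A < C := by
        rw [hCA]; nlinarith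
      nlinarith
    · have hexp : θ - 1 < Real.exp (θ * ((N:ℝ) - 2*(L:ℝ) - 1)) := by
        have h2 : θ ≤ θ * ((N:ℝ) - 2*(L:ℝ) - 1) := by nlinarith
        have h3 : 1 + θ < Real.exp θ := by
          have := Real.add_one_lt_exp (by linarith : θ ≠ 0)
          linarith
        have h4 : Real.exp θ ≤ Real.exp (θ * ((N:ℝ) - 2*(L:ℝ) - 1)) :=
          Real.exp_le_exp.mpr h2
        linarith
      rw [hBC]
      nlinarith
  have hθ2 : (0:ℝ) < θ^2 := by positivity
  rw [← sub_pos]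
  have heq : 1 / θ ^ 2 * B + (L:ℝ) / θ * C -
      1 / θ * A * (((L : ℝ) + 1 - 1 / θ) * Real.exp (θ * L) + 1 / θ - 1)
      = (B - (θ - 1) * (C - A)) / θ^2 := by
    rw [hCA]
    field_simp
    ring
  rw [heq]
  exact div_pos (by linarith) hθ2
end

section
/- Let A, B be matrices of the same size with B = A + E and rank(A) = rank(B). Then ‖B⁺ − A⁺‖₂ ≤ ((1+√5)/2) ‖A⁺‖₂ ‖B⁺‖₂ ‖E‖₂, where ⁺ denotes the Moore–Penrose pseudoinverse and ‖·‖₂ the spectral norm. -/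
open Matrix Module
open scoped Matrix.Norms.L2Operator RealInnerProductSpace
noncomputable section
namespace StewartAux
abbrev Ev (k : ℕ) := EuclideanSpace ℝ (Fin k)
def mulE {a b : ℕ} (M : Matrix (Fin a) (Fin b) ℝ) (x : Ev b) : Ev a :=
  Matrix.toEuclideanLin M x
variable {a b c k : ℕ}
lemma mulE_mul (M : Matrix (Fin a) (Fin b) ℝ) (N : Matrix (Fin b) (Fin c) ℝ) (x : Ev c) :
    mulE (M * N) x = mulE M (mulE N x) := by
  simp [mulE, Matrix.toEuclideanLin_apply, Matrix.mulVec_mulVec]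
lemma mulE_one (x : Ev a) : mulE (1 : Matrix (Fin a) (Fin a) ℝ) x = x := by
  simp [mulE, Matrix.toEuclideanLin_apply]
lemma mulE_sub (M N : Matrix (Fin a) (Fin b) ℝ) (x : Ev b) :
    mulE (M - N) x = mulE M x - mulE N x := by simp [mulE]
lemma mulE_add (M N : Matrix (Fin a) (Fin b) ℝ) (x : Ev b) :
    mulE (M + N) x = mulE M x + mulE N x := by simp [mulE]
lemma mulE_neg (M : Matrix (Fin a) (Fin b) ℝ) (x : Ev b) :
    mulE (-M) x = -(mulE M x) := by simp [mulE]
lemma norm_mulE_le (M : Matrix (Fin a) (Fin b) ℝ) (x : Ev b) :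
    ‖mulE M x‖ ≤ ‖M‖ * ‖x‖ := M.l2_opNorm_mulVec x
lemma opNorm_le_bound (M : Matrix (Fin a) (Fin b) ℝ) {c : ℝ} (hc : 0 ≤ c)
    (h : ∀ x : Ev b, ‖mulE M x‖ ≤ c * ‖x‖) : ‖M‖ ≤ c := by
  rw [Matrix.l2_opNorm_def]
  exact ContinuousLinearMap.opNorm_le_bound _ hc h
lemma transpose_eq_conjTranspose (M : Matrix (Fin a) (Fin b) ℝ) : Mᵀ = Mᴴ := by
  ext i j; simp [Matrix.conjTranspose_apply]
lemma opNorm_transpose (M : Matrix (Fin a) (Fin b) ℝ) : ‖Mᵀ‖ = ‖M‖ := by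
  rw [transpose_eq_conjTranspose, Matrix.l2_opNorm_conjTranspose]
lemma inner_mulE (M : Matrix (Fin a) (Fin b) ℝ) (x : Ev b) (y : Ev a) :
    ⟪mulE M x, y⟫ = ⟪x, mulE Mᵀ y⟫ := by
  rw [transpose_eq_conjTranspose, mulE, mulE, Matrix.toEuclideanLin_conjTranspose_eq_adjoint,
    LinearMap.adjoint_inner_right]

lemma scalar_step {s nu nv np nd : ℝ} (hs0 : 0 ≤ s) (hvpos : 0 < nv) (hnu : 0 ≤ nu)
    (hnp : 0 ≤ np) (hnd : 0 ≤ nd) (hv2 : nv ^ 2 ≤ nu ^ 2 + s ^ 2 * nv ^ 2)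
    (hPu : nu ^ 2 ≤ np * nv) (hpy : np ^ 2 + nd ^ 2 = nu ^ 2) : nd ≤ s * nu := by
  have h8 : nu ^ 2 * nu ^ 2 ≤ (np * nv) ^ 2 := by nlinarith [sq_nonneg nu]
  have h9 : (1 - s ^ 2) * nv ^ 2 * nu ^ 2 ≤ np ^ 2 * nv ^ 2 := by nlinarith [sq_nonneg nu]
  have hnp2 : (1 - s ^ 2) * nu ^ 2 ≤ np ^ 2 := by nlinarith [mul_pos hvpos hvpos]
  have hd2 : nd ^ 2 ≤ (s * nu) ^ 2 := by nlinarith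
  nlinarith [mul_nonneg hs0 hnu]

lemma sqle {s t : ℝ} (hs : 0 ≤ s) (ht : 0 ≤ t) (h : s ^ 2 ≤ t ^ 2) : s ≤ t := by nlinarith

def IsProjM (P : Matrix (Fin k) (Fin k) ℝ) : Prop := Pᵀ = P ∧ P * P = P

lemma IsProjM.one_sub {P : Matrix (Fin k) (Fin k) ℝ} (hP : IsProjM P) : IsProjM (1 - P) := by
  obtain ⟨h1, h2⟩ := hP
  constructor
  · simp [Matrix.transpose_sub, h1]
  · simp only [Matrix.sub_mul, Matrix.mul_sub, Matrix.one_mul, Matrix.mul_one, h2]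
    abel

lemma inner_mulE_symm {P : Matrix (Fin k) (Fin k) ℝ} (hP : IsProjM P) (x y : Ev k) :
    ⟪mulE P x, y⟫ = ⟪x, mulE P y⟫ := by rw [inner_mulE, hP.1]

lemma proj_pythagoras {P : Matrix (Fin k) (Fin k) ℝ} (hP : IsProjM P) (x : Ev k) :
    ‖mulE P x‖ ^ 2 + ‖x - mulE P x‖ ^ 2 = ‖x‖ ^ 2 := by
  have hz : mulE P (x - mulE P x) = 0 := by
    rw [show x - mulE P x = mulE (1 - P) x from by rw [mulE_sub, mulE_one], ← mulE_mul]
    have h0 : P * (1 - P) = 0 := by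
      rw [Matrix.mul_sub, Matrix.mul_one, hP.2, sub_self]
    rw [h0]
    simp [mulE]
  have horth : ⟪mulE P x, x - mulE P x⟫ = 0 := by
    rw [inner_mulE_symm hP, hz, inner_zero_right]
  have hx : x = mulE P x + (x - mulE P x) := by abel
  calc ‖mulE P x‖ ^ 2 + ‖x - mulE P x‖ ^ 2
      = ‖mulE P x‖ ^ 2 + 2 * ⟪mulE P x, x - mulE P x⟫ + ‖x - mulE P x‖ ^ 2 := by
        rw [horth]; ring
    _ = ‖mulE P x + (x - mulE P x)‖ ^ 2 := (norm_add_sq_real _ _).symm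
    _ = ‖x‖ ^ 2 := by rw [← hx]

lemma norm_mulE_proj_le {P : Matrix (Fin k) (Fin k) ℝ} (hP : IsProjM P) (x : Ev k) :
    ‖mulE P x‖ ≤ ‖x‖ := by
  have := proj_pythagoras hP x
  exact sqle (norm_nonneg _) (norm_nonneg _) (by nlinarith [sq_nonneg ‖x - mulE P x‖])

lemma opNorm_proj_le {P : Matrix (Fin k) (Fin k) ℝ} (hP : IsProjM P) : ‖P‖ ≤ 1 := by
  refine opNorm_le_bound _ zero_le_one fun x => ?_
  rw [one_mul]; exact norm_mulE_proj_le hP x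

lemma finrank_range_eq_rank (M : Matrix (Fin a) (Fin b) ℝ) :
    finrank ℝ (LinearMap.range (Matrix.toEuclideanLin M)) = M.rank :=
  (Matrix.rank_eq_finrank_range_toLin M (PiLp.basisFun 2 ℝ (Fin a))
    (PiLp.basisFun 2 ℝ (Fin b))).symm

lemma mem_range_proj {P : Matrix (Fin k) (Fin k) ℝ} (hP : IsProjM P) {u : Ev k} :
    u ∈ LinearMap.range (Matrix.toEuclideanLin P) ↔ mulE P u = u := by
  constructor
  · rintro ⟨y, rfl⟩
    show mulE P (mulE P y) = mulE P y
    rw [← mulE_mul, hP.2]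
  · intro h; exact ⟨u, h⟩

theorem key_proj_lemma {P Q : Matrix (Fin k) (Fin k) ℝ} (hP : IsProjM P) (hQ : IsProjM Q)
    (hr : P.rank = Q.rank) : ‖(1 - P) * Q‖ ≤ ‖(1 - Q) * P‖ := by
  set s := ‖(1 - Q) * P‖ with hs
  have hs0 : 0 ≤ s := norm_nonneg _
  rcases le_or_gt 1 s with h1 | h1
  · calc ‖(1 - P) * Q‖ ≤ ‖(1 - P)‖ * ‖Q‖ := Matrix.l2_opNorm_mul _ _
      _ ≤ 1 := mul_le_one₀ (opNorm_proj_le hP.one_sub) (norm_nonneg _) (opNorm_proj_le hQ)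
      _ ≤ s := h1
  · -- main case s < 1
    set f := Matrix.toEuclideanLin P with hf
    set g := Matrix.toEuclideanLin Q with hg
    set U := LinearMap.range f with hU
    set V := LinearMap.range g with hV
    have hdim : finrank ℝ U = finrank ℝ V := by
      rw [hU, hV, finrank_range_eq_rank, finrank_range_eq_rank, hr]
    have hsx : ∀ x : Ev k, ‖mulE ((1 - Q) * P) x‖ ≤ s * ‖x‖ := fun x => norm_mulE_le _ x
    -- members of U are fixed by P, etc.
    have hUfix : ∀ v ∈ U, mulE P v = v := fun v hv => (mem_range_proj hP).mp hv
    have hVfix : ∀ v ∈ V, mulE Q v = v := fun v hv => (mem_range_proj hQ).mp hv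
    -- Step A : map f V = U
    have stepA : Submodule.map f V = U := by
      have hWU : Submodule.map f V ≤ U := by
        rintro w ⟨z, hz, rfl⟩; exact ⟨z, rfl⟩
      have hbot : (Submodule.map f V)ᗮ ⊓ U = ⊥ := by
        rw [Submodule.eq_bot_iff]
        rintro v ⟨hvW, hvU⟩
        have hPv : mulE P v = v := hUfix v hvU
        have hVperp : ∀ z ∈ V, ⟪v, z⟫ = 0 := by
          intro z hz
          have h0 : ⟪mulE P z, v⟫ = 0 := hvW _ (Submodule.mem_map_of_mem hz)
          calc ⟪v, z⟫ = ⟪mulE P v, z⟫ := by rw [hPv]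
            _ = ⟪v, mulE P z⟫ := inner_mulE_symm hP v z
            _ = ⟪mulE P z, v⟫ := real_inner_comm _ _
            _ = 0 := h0
        have hQv : mulE Q v = 0 := by
          have h2 : ⟪v, mulE Q v⟫ = 0 := hVperp _ ⟨v, rfl⟩
          have h3 : ⟪mulE Q v, mulE Q v⟫ = 0 := by
            calc ⟪mulE Q v, mulE Q v⟫ = ⟪v, mulE Q (mulE Q v)⟫ := inner_mulE_symm hQ _ _
              _ = ⟪v, mulE (Q * Q) v⟫ := by rw [mulE_mul]
              _ = ⟪v, mulE Q v⟫ := by rw [hQ.2]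
              _ = 0 := h2
          exact inner_self_eq_zero.mp h3
        have h4 : ‖v‖ ≤ s * ‖v‖ := by
          have h5 : v - mulE Q v = mulE ((1 - Q) * P) v := by
            rw [mulE_mul, hPv, mulE_sub, mulE_one]
          calc ‖v‖ = ‖v - mulE Q v‖ := by rw [hQv, sub_zero]
            _ = ‖mulE ((1 - Q) * P) v‖ := by rw [h5]
            _ ≤ s * ‖v‖ := hsx v
        have : ‖v‖ = 0 := by nlinarith [norm_nonneg v]
        exact norm_eq_zero.mp this
      have := Submodule.sup_orthogonal_inf_of_hasOrthogonalProjection hWU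
      rwa [hbot, sup_bot_eq] at this
    -- Step B : injectivity of f on V
    have stepB : ∀ z ∈ V, mulE P z = 0 → z = 0 := by
      intro z hz hz0
      have hnr : finrank ℝ (LinearMap.range (f.domRestrict V)) = finrank ℝ V := by
        rw [LinearMap.range_domRestrict, stepA, hdim]
      have hrn := LinearMap.finrank_range_add_finrank_ker (f.domRestrict V)
      have hker : finrank ℝ (LinearMap.ker (f.domRestrict V)) = 0 := by omega
      have hker' : LinearMap.ker (f.domRestrict V) = ⊥ :=
        Submodule.finrank_eq_zero.mp hker
      have : (⟨z, hz⟩ : V) ∈ LinearMap.ker (f.domRestrict V) := by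
        simp [LinearMap.mem_ker, LinearMap.domRestrict_apply]
        exact hz0
      rw [hker'] at this
      simpa using Subtype.ext_iff.mp this
    -- Step C : map g U = V
    have stepC : Submodule.map g U = V := by
      have hWV : Submodule.map g U ≤ V := by
        rintro w ⟨z, hz, rfl⟩; exact ⟨z, rfl⟩
      have hbot : (Submodule.map g U)ᗮ ⊓ V = ⊥ := by
        rw [Submodule.eq_bot_iff]
        rintro v ⟨hvW, hvV⟩
        have hQv : mulE Q v = v := hVfix v hvV
        have hUperp : ∀ z ∈ U, ⟪v, z⟫ = 0 := by
          intro z hz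
          have h0 : ⟪mulE Q z, v⟫ = 0 := hvW _ (Submodule.mem_map_of_mem hz)
          calc ⟪v, z⟫ = ⟪mulE Q v, z⟫ := by rw [hQv]
            _ = ⟪v, mulE Q z⟫ := inner_mulE_symm hQ v z
            _ = ⟪mulE Q z, v⟫ := real_inner_comm _ _
            _ = 0 := h0
        have hPv : mulE P v = 0 := by
          have h2 : ⟪v, mulE P v⟫ = 0 := hUperp _ ⟨v, rfl⟩
          have h3 : ⟪mulE P v, mulE P v⟫ = 0 := by
            calc ⟪mulE P v, mulE P v⟫ = ⟪v, mulE P (mulE P v)⟫ := inner_mulE_symm hP _ _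
              _ = ⟪v, mulE (P * P) v⟫ := by rw [mulE_mul]
              _ = ⟪v, mulE P v⟫ := by rw [hP.2]
              _ = 0 := h2
          exact inner_self_eq_zero.mp h3
        exact stepB v hvV hPv
      have := Submodule.sup_orthogonal_inf_of_hasOrthogonalProjection hWV
      rwa [hbot, sup_bot_eq] at this
    -- final bound
    refine opNorm_le_bound _ hs0 fun x => ?_
    set u := mulE Q x with hu
    have huV : u ∈ V := ⟨x, rfl⟩
    have hQu : mulE Q u = u := hVfix u huV
    have hrw : mulE ((1 - P) * Q) x = u - mulE P u := by
      rw [mulE_mul, ← hu, mulE_sub, mulE_one]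
    rw [hrw]
    have hmain : ‖u - mulE P u‖ ≤ s * ‖u‖ := by
      rcases eq_or_ne u 0 with h0 | h0
      · simp [h0, mulE]
      obtain ⟨v₀, hv₀U, hv₀⟩ : ∃ v₀ ∈ U, g v₀ = u := by
        have : u ∈ Submodule.map g U := stepC ▸ huV
        exact this
      have hgv : mulE Q v₀ = u := hv₀
      have hPv₀ : mulE P v₀ = v₀ := hUfix v₀ hv₀U
      have hv0ne : v₀ ≠ 0 := by
        rintro rfl
        apply h0
        rw [← hgv]; simp [mulE]
      -- ‖v₀‖² ≤ ‖u‖² + s²‖v₀‖²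
      have hpyQ := proj_pythagoras hQ v₀
      have hsub : v₀ - mulE Q v₀ = mulE ((1 - Q) * P) v₀ := by
        rw [mulE_mul, hPv₀, mulE_sub, mulE_one]
      rw [hgv] at hpyQ hsub
      have h6 : ‖v₀ - u‖ ≤ s * ‖v₀‖ := by rw [hsub]; exact hsx v₀
      have h7 : ‖v₀ - u‖ ^ 2 ≤ (s * ‖v₀‖) ^ 2 := pow_le_pow_left₀ (norm_nonneg _) h6 2
      have hv2 : ‖v₀‖ ^ 2 ≤ ‖u‖ ^ 2 + s ^ 2 * ‖v₀‖ ^ 2 := by nlinarith [hpyQ, h7]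
      have hinner : ⟪u, v₀⟫ = ‖u‖ ^ 2 := by
        calc ⟪u, v₀⟫ = ⟪mulE Q u, v₀⟫ := by rw [hQu]
          _ = ⟪u, mulE Q v₀⟫ := inner_mulE_symm hQ u v₀
          _ = ⟪u, u⟫ := by rw [hgv]
          _ = ‖u‖ ^ 2 := real_inner_self_eq_norm_sq u
      have hPu : ‖u‖ ^ 2 ≤ ‖mulE P u‖ * ‖v₀‖ := by
        calc ‖u‖ ^ 2 = ⟪u, v₀⟫ := hinner.symm
          _ = ⟪u, mulE P v₀⟫ := by rw [hPv₀]
          _ = ⟪mulE P u, v₀⟫ := (inner_mulE_symm hP u v₀).symm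
          _ ≤ ‖mulE P u‖ * ‖v₀‖ := real_inner_le_norm _ _
      have hpyP := proj_pythagoras hP u
      have hvpos : 0 < ‖v₀‖ := norm_pos_iff.mpr hv0ne
      exact scalar_step hs0 hvpos (norm_nonneg u) (norm_nonneg (mulE P u))
        (norm_nonneg (u - mulE P u)) hv2 hPu hpyP
    calc ‖u - mulE P u‖ ≤ s * ‖u‖ := hmain
      _ ≤ s * ‖x‖ := by
        have := norm_mulE_proj_le hQ x
        exact mul_le_mul_of_nonneg_left (hu ▸ this) hs0

lemma norm_mulE_comp_le (X : Matrix (Fin a) (Fin b) ℝ) (Y : Matrix (Fin b) (Fin c) ℝ)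
    (z : Ev c) : ‖mulE X (mulE Y z)‖ ≤ ‖X‖ * (‖Y‖ * ‖z‖) :=
  le_trans (norm_mulE_le _ _) (mul_le_mul_of_nonneg_left (norm_mulE_le _ _) (norm_nonneg X))

lemma mulE_sub_arg (M : Matrix (Fin a) (Fin b) ℝ) (y z : Ev b) :
    mulE M (y - z) = mulE M y - mulE M z := by simp [mulE]

lemma golden {g p q d X : ℝ} (hg : 0 ≤ g) (hd : 0 ≤ d) (hX : 0 ≤ X)
    (h1 : d ^ 2 ≤ (g * (p + q)) ^ 2 + (g * p) ^ 2) (h2 : p ^ 2 + q ^ 2 = X ^ 2) :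
    d ≤ (1 + Real.sqrt 5) / 2 * g * X := by
  have h5 : Real.sqrt 5 ^ 2 = 5 := Real.sq_sqrt (by norm_num)
  have h5' : (2 : ℝ) ≤ Real.sqrt 5 := by nlinarith [Real.sqrt_nonneg 5]
  set φ : ℝ := (1 + Real.sqrt 5) / 2 with hφdef
  have hφ : φ ^ 2 = φ + 1 := by rw [hφdef]; linear_combination (1 / 4) * h5
  have ht : (0 : ℝ) < φ - 1 := by rw [hφdef]; linarith
  have h01 : (φ - 1) * φ = 1 := by linear_combination hφ
  have h04 : 2 * p * q ≤ (φ - 1) * p ^ 2 + φ * q ^ 2 := by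
    have h03 : (φ - 1) * ((φ - 1) * p ^ 2 + φ * q ^ 2 - 2 * p * q) = ((φ - 1) * p - q) ^ 2 := by
      linear_combination q ^ 2 * h01
    nlinarith [sq_nonneg ((φ - 1) * p - q), h03, ht]
  have h05 : (p + q) ^ 2 + p ^ 2 ≤ (φ + 1) * (p ^ 2 + q ^ 2) := by nlinarith [h04]
  have h06 : d ^ 2 ≤ (φ * g * X) ^ 2 := by
    calc d ^ 2 ≤ (g * (p + q)) ^ 2 + (g * p) ^ 2 := h1
      _ = g ^ 2 * ((p + q) ^ 2 + p ^ 2) := by ring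
      _ ≤ g ^ 2 * ((φ + 1) * (p ^ 2 + q ^ 2)) := mul_le_mul_of_nonneg_left h05 (sq_nonneg g)
      _ = (φ + 1) * g ^ 2 * X ^ 2 := by rw [h2]; ring
      _ = (φ * g * X) ^ 2 := by linear_combination (-(g ^ 2 * X ^ 2) / 4) * h5
  exact sqle hd (mul_nonneg (mul_nonneg (by linarith) hg) hX) h06

end StewartAux

open StewartAux

/-- `P` is the Moore–Penrose pseudoinverse of `A`. -/
def IsMoorePenroseInv {m n : ℕ} (A : Matrix (Fin m) (Fin n) ℝ)
    (P : Matrix (Fin n) (Fin m) ℝ) : Prop :=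
  A * P * A = A ∧ P * A * P = P ∧ (A * P)ᵀ = A * P ∧ (P * A)ᵀ = P * A

set_option maxHeartbeats 1000000 in
/-- Stewart's perturbation bound for the Moore–Penrose pseudoinverse:
if `B = A + E` and `rank A = rank B`, then
`‖B⁺ − A⁺‖₂ ≤ ((1+√5)/2) ‖A⁺‖₂ ‖B⁺‖₂ ‖E‖₂`. -/
theorem pseudoinverse_perturbation_bound {m n : ℕ}
    (A B E : Matrix (Fin m) (Fin n) ℝ)
    (Ap Bp : Matrix (Fin n) (Fin m) ℝ)
    (hA : IsMoorePenroseInv A Ap) (hB : IsMoorePenroseInv B Bp)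
    (hE : B = A + E) (hrank : A.rank = B.rank) :
    ‖Bp - Ap‖ ≤ (1 + Real.sqrt 5) / 2 * ‖Ap‖ * ‖Bp‖ * ‖E‖ := by
  obtain ⟨hA1, hA2, hA3, hA4⟩ := hA
  obtain ⟨hB1, hB2, hB3, hB4⟩ := hB
  have hE' : E = B - A := by rw [hE]; abel
  have hPproj : IsProjM (A * Ap) := ⟨hA3, by rw [← Matrix.mul_assoc, hA1]⟩
  have hQproj : IsProjM (B * Bp) := ⟨hB3, by rw [← Matrix.mul_assoc, hB1]⟩
  have hP'proj : IsProjM (Ap * A) := by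
    refine ⟨hA4, ?_⟩
    rw [Matrix.mul_assoc, ← Matrix.mul_assoc A Ap A, hA1]
  have hQ'proj : IsProjM (Bp * B) := by
    refine ⟨hB4, ?_⟩
    rw [Matrix.mul_assoc, ← Matrix.mul_assoc B Bp B, hB1]
  -- rank equalities
  have hrP : (A * Ap).rank = A.rank := le_antisymm (Matrix.rank_mul_le_left A Ap)
    (by conv_lhs => rw [← hA1]
        exact Matrix.rank_mul_le_left (A * Ap) A)
  have hrQ : (B * Bp).rank = B.rank := le_antisymm (Matrix.rank_mul_le_left B Bp)
    (by conv_lhs => rw [← hB1]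
        exact Matrix.rank_mul_le_left (B * Bp) B)
  have hrP' : (Ap * A).rank = A.rank := le_antisymm (Matrix.rank_mul_le_right Ap A)
    (by conv_lhs => rw [← hA1, Matrix.mul_assoc]
        exact Matrix.rank_mul_le_right A (Ap * A))
  have hrQ' : (Bp * B).rank = B.rank := le_antisymm (Matrix.rank_mul_le_right Bp B)
    (by conv_lhs => rw [← hB1, Matrix.mul_assoc]
        exact Matrix.rank_mul_le_right B (Bp * B))
  have hrPQ : (A * Ap).rank = (B * Bp).rank := by rw [hrP, hrQ, hrank]
  have hrQP' : (Bp * B).rank = (Ap * A).rank := by rw [hrP', hrQ', hrank]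
  -- zero identities
  have z1 : (1 - B * Bp) * B = 0 := by
    rw [Matrix.sub_mul, Matrix.one_mul, hB1, sub_self]
  have z2 : (1 - Bp * B) * Bp = 0 := by
    rw [Matrix.sub_mul, Matrix.one_mul, hB2, sub_self]
  have z3 : A * (1 - Ap * A) = 0 := by
    rw [Matrix.mul_sub, Matrix.mul_one, ← Matrix.mul_assoc, hA1, sub_self]
  -- k2 : ‖(B*Bp) * (1 - A*Ap)‖ ≤ ‖E‖ * ‖Ap‖
  have e3 : (1 - B * Bp) * A = -((1 - B * Bp) * E) := by
    have h : (1 - B * Bp) * (A + E) = 0 := by rw [← hE]; exact z1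
    rw [Matrix.mul_add] at h
    exact eq_neg_of_add_eq_zero_left h
  have k2main : ‖(1 - B * Bp) * (A * Ap)‖ ≤ ‖E‖ * ‖Ap‖ := by
    have h0 : (1 - B * Bp) * (A * Ap) = -((1 - B * Bp) * E * Ap) := by
      rw [← Matrix.mul_assoc, e3, Matrix.neg_mul]
    rw [h0, norm_neg]
    calc ‖(1 - B * Bp) * E * Ap‖ ≤ ‖(1 - B * Bp) * E‖ * ‖Ap‖ := Matrix.l2_opNorm_mul _ _
      _ ≤ (‖(1 : Matrix (Fin m) (Fin m) ℝ) - B * Bp‖ * ‖E‖) * ‖Ap‖ :=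
          mul_le_mul_of_nonneg_right (Matrix.l2_opNorm_mul _ _) (norm_nonneg _)
      _ ≤ (1 * ‖E‖) * ‖Ap‖ := by
          have h1 := opNorm_proj_le hQproj.one_sub
          gcongr
      _ = ‖E‖ * ‖Ap‖ := by ring
  have k2 : ‖(B * Bp) * (1 - A * Ap)‖ ≤ ‖E‖ * ‖Ap‖ := by
    have ht : ((1 - A * Ap) * (B * Bp))ᵀ = (B * Bp) * (1 - A * Ap) := by
      rw [Matrix.transpose_mul, hQproj.1, Matrix.transpose_sub, Matrix.transpose_one, hPproj.1]
    calc ‖(B * Bp) * (1 - A * Ap)‖ = ‖((1 - A * Ap) * (B * Bp))ᵀ‖ := by rw [ht]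
      _ = ‖(1 - A * Ap) * (B * Bp)‖ := opNorm_transpose _
      _ ≤ ‖(1 - B * Bp) * (A * Ap)‖ := key_proj_lemma hPproj hQproj hrPQ
      _ ≤ ‖E‖ * ‖Ap‖ := k2main
  -- k3 : ‖(1 - Bp*B) * (Ap*A)‖ ≤ ‖Bp‖ * ‖E‖
  have z5 : B * (1 - Ap * A) = E * (1 - Ap * A) := by
    have h : (B - E) * (1 - Ap * A) = 0 := by
      rw [show B - E = A from by rw [hE]; abel, z3]
    rw [Matrix.sub_mul] at h
    exact sub_eq_zero.mp h
  have k3main : ‖(Bp * B) * (1 - Ap * A)‖ ≤ ‖Bp‖ * ‖E‖ := by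
    have h0 : (Bp * B) * (1 - Ap * A) = Bp * E * (1 - Ap * A) := by
      rw [Matrix.mul_assoc, z5, ← Matrix.mul_assoc]
    rw [h0]
    calc ‖Bp * E * (1 - Ap * A)‖
        ≤ ‖Bp * E‖ * ‖(1 : Matrix (Fin n) (Fin n) ℝ) - Ap * A‖ := Matrix.l2_opNorm_mul _ _
      _ ≤ ‖Bp * E‖ * 1 := by
          have h1 := opNorm_proj_le hP'proj.one_sub
          gcongr
      _ = ‖Bp * E‖ := mul_one _
      _ ≤ ‖Bp‖ * ‖E‖ := Matrix.l2_opNorm_mul _ _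
  have k3 : ‖(1 - Bp * B) * (Ap * A)‖ ≤ ‖Bp‖ * ‖E‖ := by
    have ht : ((1 - Ap * A) * (Bp * B))ᵀ = (Bp * B) * (1 - Ap * A) := by
      rw [Matrix.transpose_mul, hQ'proj.1, Matrix.transpose_sub, Matrix.transpose_one, hP'proj.1]
    calc ‖(1 - Bp * B) * (Ap * A)‖
        ≤ ‖(1 - Ap * A) * (Bp * B)‖ := key_proj_lemma hQ'proj hP'proj hrQP'
      _ = ‖((1 - Ap * A) * (Bp * B))ᵀ‖ := (opNorm_transpose _).symm
      _ = ‖(Bp * B) * (1 - Ap * A)‖ := by rw [ht]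
      _ ≤ ‖Bp‖ * ‖E‖ := k3main
  -- decomposition
  have decomp : Bp - Ap = Bp * ((1 - A * Ap) - E * Ap) - (1 - Bp * B) * Ap := by
    rw [hE']
    simp only [Matrix.mul_sub, Matrix.sub_mul, Matrix.mul_one, Matrix.one_mul, Matrix.mul_assoc]
    abel
  -- useful products
  have e4 : Ap * (A * Ap) = Ap := by rw [← Matrix.mul_assoc, hA2]
  have e7 : Bp * (B * Bp) = Bp := by rw [← Matrix.mul_assoc, hB2]
  -- pointwise bound
  set γ : ℝ := ‖Ap‖ * ‖Bp‖ * ‖E‖ with hγdef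
  have hγ0 : 0 ≤ γ := by positivity
  have hcoef : (0 : ℝ) ≤ (1 + Real.sqrt 5) / 2 * ‖Ap‖ * ‖Bp‖ * ‖E‖ := by
    have := Real.sqrt_nonneg 5
    positivity
  refine opNorm_le_bound _ hcoef fun x => ?_
  set aa : ℝ := ‖mulE (A * Ap) x‖ with haa
  set bb : ℝ := ‖mulE (1 - A * Ap) x‖ with hbb
  have haa0 : 0 ≤ aa := norm_nonneg _
  have hbb0 : 0 ≤ bb := norm_nonneg _
  set u : Ev n := mulE Bp (mulE ((1 - A * Ap) - E * Ap) x) with hu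
  set w : Ev n := mulE (1 - Bp * B) (mulE Ap x) with hw
  have hDx : mulE (Bp - Ap) x = u - w := by
    rw [decomp, mulE_sub, mulE_mul, mulE_mul]
  -- orthogonality
  have horth : ⟪u, w⟫ = 0 := by
    have h1 : ⟪u, w⟫ = ⟪mulE (1 - Bp * B) u, mulE Ap x⟫ := by
      rw [hw, real_inner_comm, inner_mulE_symm hQ'proj.one_sub, real_inner_comm]
    have h2 : mulE (1 - Bp * B) u = 0 := by
      rw [hu, ← mulE_mul, ← mulE_mul, z2]
      simp [mulE]
    rw [h1, h2, inner_zero_left]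
  -- bound on the two pieces of u
  have hT1 : ‖mulE Bp (mulE (E * Ap) x)‖ ≤ γ * aa := by
    have e5 : (Bp * (E * Ap)) * (A * Ap) = Bp * (E * Ap) := by
      rw [Matrix.mul_assoc Bp (E * Ap) (A * Ap), Matrix.mul_assoc E Ap (A * Ap), e4]
    have h0 : mulE Bp (mulE (E * Ap) x) = mulE (Bp * (E * Ap)) (mulE (A * Ap) x) := by
      conv_lhs => rw [← mulE_mul, ← e5, mulE_mul]
    rw [h0]
    calc ‖mulE (Bp * (E * Ap)) (mulE (A * Ap) x)‖
        ≤ ‖Bp * (E * Ap)‖ * aa := norm_mulE_le _ _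
      _ ≤ (‖Bp‖ * ‖E * Ap‖) * aa :=
          mul_le_mul_of_nonneg_right (Matrix.l2_opNorm_mul _ _) haa0
      _ ≤ (‖Bp‖ * (‖E‖ * ‖Ap‖)) * aa :=
          mul_le_mul_of_nonneg_right
            (mul_le_mul_of_nonneg_left (Matrix.l2_opNorm_mul E Ap) (norm_nonneg Bp)) haa0
      _ = γ * aa := by rw [hγdef]; ring
  have hT2 : ‖mulE Bp (mulE (1 - A * Ap) x)‖ ≤ γ * bb := by
    have e8 : Bp * (1 - A * Ap) = Bp * (((B * Bp) * (1 - A * Ap)) * (1 - A * Ap)) := by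
      rw [Matrix.mul_assoc (B * Bp) (1 - A * Ap) (1 - A * Ap), hPproj.one_sub.2,
        ← Matrix.mul_assoc Bp (B * Bp) (1 - A * Ap), e7]
    have h0 : mulE Bp (mulE (1 - A * Ap) x)
        = mulE Bp (mulE ((B * Bp) * (1 - A * Ap)) (mulE (1 - A * Ap) x)) := by
      conv_lhs => rw [← mulE_mul, e8, mulE_mul, mulE_mul]
    rw [h0]
    calc ‖mulE Bp (mulE ((B * Bp) * (1 - A * Ap)) (mulE (1 - A * Ap) x))‖
        ≤ ‖Bp‖ * (‖(B * Bp) * (1 - A * Ap)‖ * bb) := norm_mulE_comp_le _ _ _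
      _ ≤ ‖Bp‖ * ((‖E‖ * ‖Ap‖) * bb) :=
          mul_le_mul_of_nonneg_left (mul_le_mul_of_nonneg_right k2 hbb0) (norm_nonneg Bp)
      _ = γ * bb := by rw [hγdef]; ring
  have huB : ‖u‖ ≤ γ * (aa + bb) := by
    have h0 : u = mulE Bp (mulE (1 - A * Ap) x) - mulE Bp (mulE (E * Ap) x) := by
      rw [hu, mulE_sub, mulE_sub_arg]
    rw [h0]
    calc ‖mulE Bp (mulE (1 - A * Ap) x) - mulE Bp (mulE (E * Ap) x)‖
        ≤ ‖mulE Bp (mulE (1 - A * Ap) x)‖ + ‖mulE Bp (mulE (E * Ap) x)‖ := norm_sub_le _ _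
      _ ≤ γ * bb + γ * aa := add_le_add hT2 hT1
      _ = γ * (aa + bb) := by ring
  have hwB : ‖w‖ ≤ γ * aa := by
    have e9 : (1 - Bp * B) * Ap = ((1 - Bp * B) * (Ap * A)) * (Ap * (A * Ap)) := by
      rw [Matrix.mul_assoc (1 - Bp * B) (Ap * A) (Ap * (A * Ap)), e4, hA2]
    have h0 : w = mulE ((1 - Bp * B) * (Ap * A)) (mulE Ap (mulE (A * Ap) x)) := by
      rw [hw]
      conv_lhs => rw [← mulE_mul, e9, mulE_mul ((1 - Bp * B) * (Ap * A)) (Ap * (A * Ap)) x,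
        mulE_mul Ap (A * Ap) x]
    rw [h0]
    calc ‖mulE ((1 - Bp * B) * (Ap * A)) (mulE Ap (mulE (A * Ap) x))‖
        ≤ ‖(1 - Bp * B) * (Ap * A)‖ * (‖Ap‖ * aa) := norm_mulE_comp_le _ _ _
      _ ≤ (‖Bp‖ * ‖E‖) * (‖Ap‖ * aa) := by
          have h1 : (0:ℝ) ≤ ‖Ap‖ * aa := by positivity
          exact mul_le_mul_of_nonneg_right k3 h1
      _ = γ * aa := by rw [hγdef]; ring
  -- pythagoras
  have hab : aa ^ 2 + bb ^ 2 = ‖x‖ ^ 2 := by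
    have h0 := proj_pythagoras hPproj x
    have h1 : mulE (1 - A * Ap) x = x - mulE (A * Ap) x := by
      rw [mulE_sub, mulE_one]
    rw [haa, hbb, h1]
    exact h0
  -- combine
  have hD2 : ‖mulE (Bp - Ap) x‖ ^ 2 = ‖u‖ ^ 2 + ‖w‖ ^ 2 := by
    rw [hDx, norm_sub_sq_real, horth]
    ring
  have h1 : ‖mulE (Bp - Ap) x‖ ^ 2 ≤ (γ * (aa + bb)) ^ 2 + (γ * aa) ^ 2 := by
    rw [hD2]
    have hu2 : ‖u‖ ^ 2 ≤ (γ * (aa + bb)) ^ 2 := by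
      have := pow_le_pow_left₀ (norm_nonneg u) huB 2
      exact this
    have hw2 : ‖w‖ ^ 2 ≤ (γ * aa) ^ 2 := pow_le_pow_left₀ (norm_nonneg w) hwB 2
    exact add_le_add hu2 hw2
  have := golden hγ0 (norm_nonneg (mulE (Bp - Ap) x)) (norm_nonneg x) h1 hab
  calc ‖mulE (Bp - Ap) x‖ ≤ (1 + Real.sqrt 5) / 2 * γ * ‖x‖ := this
    _ = (1 + Real.sqrt 5) / 2 * ‖Ap‖ * ‖Bp‖ * ‖E‖ * ‖x‖ := by rw [hγdef]; ring
end
end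

section
/- Let A, E be matrices of the same size with rank(A+E) = rank(A) and ‖E‖₂ < 1/‖A⁺‖₂. Then ‖(A+E)⁺‖₂ ≤ ‖A⁺‖₂ / (1 − ‖A⁺‖₂ ‖E‖₂). -/
open Matrix
open scoped Matrix.Norms.L2Operator

namespace WedinAux

/-- View a plain vector as an element of Euclidean space. -/
noncomputable def ev {k : ℕ} (x : Fin k → ℝ) : EuclideanSpace ℝ (Fin k) :=
  (WithLp.equiv 2 _).symm x

lemma ev_add {k : ℕ} (x y : Fin k → ℝ) : ev (x + y) = ev x + ev y := rfl

lemma ev_eq_zero {k : ℕ} {x : Fin k → ℝ} (h : ev x = 0) : x = 0 := (WithLp.toLp_eq_zero 2).1 h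

lemma norm_ev_zero {k : ℕ} : ‖ev (0 : Fin k → ℝ)‖ = 0 := by simp [ev]

lemma norm_mulVec_le {m n : ℕ} (M : Matrix (Fin m) (Fin n) ℝ) (x : Fin n → ℝ) :
    ‖ev (M *ᵥ x)‖ ≤ ‖M‖ * ‖ev x‖ :=
  M.l2_opNorm_mulVec (ev x)

lemma opNorm_le_of {m n : ℕ} (M : Matrix (Fin m) (Fin n) ℝ) {c : ℝ} (hc : 0 ≤ c)
    (h : ∀ x : Fin n → ℝ, ‖ev (M *ᵥ x)‖ ≤ c * ‖ev x‖) : ‖M‖ ≤ c := by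
  rw [Matrix.l2_opNorm_def]
  exact ContinuousLinearMap.opNorm_le_bound _ hc fun x => h (WithLp.ofLp x)

lemma inner_mulVec {m n : ℕ} (M : Matrix (Fin m) (Fin n) ℝ) (x : Fin n → ℝ) (y : Fin m → ℝ) :
    (inner ℝ (ev (M *ᵥ x)) (ev y) : ℝ) = inner ℝ (ev x) (ev (Mᵀ *ᵥ y)) := by
  simp only [PiLp.inner_apply, RCLike.inner_apply, conj_trivial, ev,
    WithLp.equiv_symm_apply, PiLp.toLp_apply, Matrix.mulVec, dotProduct, Matrix.transpose_apply,
    Finset.sum_mul, Finset.mul_sum]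
  rw [Finset.sum_comm]
  exact Finset.sum_congr rfl fun i _ => Finset.sum_congr rfl fun j _ => by ring

lemma norm_proj_le {k : ℕ} (P : Matrix (Fin k) (Fin k) ℝ) (hsym : Pᵀ = P)
    (hidem : P * P = P) (x : Fin k → ℝ) : ‖ev (P *ᵥ x)‖ ≤ ‖ev x‖ := by
  have h1 : (inner ℝ (ev (P *ᵥ x)) (ev (P *ᵥ x)) : ℝ) = inner ℝ (ev x) (ev (P *ᵥ x)) := by
    rw [inner_mulVec, hsym, Matrix.mulVec_mulVec, hidem]
  have h2 := real_inner_self_eq_norm_mul_norm (ev (P *ᵥ x))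
  have h3 := real_inner_le_norm (ev x) (ev (P *ᵥ x))
  nlinarith [norm_nonneg (ev (P *ᵥ x)), norm_nonneg (ev x)]

end WedinAux

open WedinAux

set_option maxHeartbeats 2000000 in
/-- Wedin's bound: if `rank (A+E) = rank A` and `‖E‖₂ < 1/‖A⁺‖₂`, then
`‖(A+E)⁺‖₂ ≤ ‖A⁺‖₂/(1 − ‖A⁺‖₂‖E‖₂)`. -/
theorem wedin_pseudoinverse_bound {m n : ℕ}
    (A E : Matrix (Fin m) (Fin n) ℝ)
    (Ap Bp : Matrix (Fin n) (Fin m) ℝ)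
    (hA : IsMoorePenroseInv A Ap) (hB : IsMoorePenroseInv (A + E) Bp)
    (hrank : (A + E).rank = A.rank)
    (hE : ‖E‖ < 1 / ‖Ap‖) :
    ‖Bp‖ ≤ ‖Ap‖ / (1 - ‖Ap‖ * ‖E‖) := by
  obtain ⟨hA1, hA2, hA3, hA4⟩ := hA
  obtain ⟨hB1, hB2, hB3, hB4⟩ := hB
  set B : Matrix (Fin m) (Fin n) ℝ := A + E with hBdef
  have hApnorm : 0 < ‖Ap‖ := by
    rcases (norm_nonneg Ap).lt_or_eq with h | h
    · exact h
    · rw [← h, div_zero] at hE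
      exact absurd hE (not_lt.mpr (norm_nonneg E))
  set c : ℝ := 1 / ‖Ap‖ - ‖E‖ with hcdef
  have hc : 0 < c := by simp only [hcdef]; linarith
  have hden : 0 < 1 - ‖Ap‖ * ‖E‖ := by
    have h := mul_lt_mul_of_pos_left hE hApnorm
    rw [mul_one_div, div_self (ne_of_gt hApnorm)] at h
    linarith
  set S : Submodule ℝ (Fin n → ℝ) := LinearMap.range (Ap * A).mulVecLin with hSdef
  have hPAidem : (Ap * A) * (Ap * A) = Ap * A := by
    rw [Matrix.mul_assoc Ap A (Ap * A), ← Matrix.mul_assoc A Ap A, hA1]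
  have hS_fix : ∀ u ∈ S, (Ap * A) *ᵥ u = u := by
    rintro u ⟨w, rfl⟩
    simp only [Matrix.mulVecLin_apply, Matrix.mulVec_mulVec, hPAidem]
  have hAu : ∀ u ∈ S, ‖ev u‖ ≤ ‖Ap‖ * ‖ev (A *ᵥ u)‖ := by
    intro u hu
    have h : Ap *ᵥ (A *ᵥ u) = u := by rw [Matrix.mulVec_mulVec]; exact hS_fix u hu
    calc ‖ev u‖ = ‖ev (Ap *ᵥ (A *ᵥ u))‖ := by rw [h]
      _ ≤ ‖Ap‖ * ‖ev (A *ᵥ u)‖ := norm_mulVec_le _ _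
  have hBu : ∀ u ∈ S, c * ‖ev u‖ ≤ ‖ev (B *ᵥ u)‖ := by
    intro u hu
    have hsplit : A *ᵥ u = B *ᵥ u + (-E) *ᵥ u := by
      simp [hBdef, Matrix.add_mulVec, Matrix.neg_mulVec]
    have h1 : ‖ev (A *ᵥ u)‖ ≤ ‖ev (B *ᵥ u)‖ + ‖ev ((-E) *ᵥ u)‖ := by
      rw [hsplit, ev_add]; exact norm_add_le _ _
    have h2 : ‖ev ((-E) *ᵥ u)‖ ≤ ‖E‖ * ‖ev u‖ := by
      have h := norm_mulVec_le (-E) u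
      rwa [norm_neg] at h
    have h3 := hAu u hu
    have h4 : (1 / ‖Ap‖) * ‖ev u‖ ≤ ‖ev (A *ᵥ u)‖ := by
      rw [div_mul_eq_mul_div, one_mul, div_le_iff₀ hApnorm]
      linarith [h3]
    simp only [hcdef]
    nlinarith
  have hSrank : Module.finrank ℝ S = A.rank := by
    have h1 : (Ap * A).rank ≤ A.rank := Matrix.rank_mul_le_right Ap A
    have h2 : A.rank ≤ (Ap * A).rank := by
      calc A.rank = (A * (Ap * A)).rank := by rw [← Matrix.mul_assoc, hA1]
        _ ≤ (Ap * A).rank := Matrix.rank_mul_le_right _ _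
    have h3 : (Ap * A).rank = A.rank := le_antisymm h1 h2
    simpa [Matrix.rank, hSdef] using h3
  set T : (Fin n → ℝ) →ₗ[ℝ] (Fin m → ℝ) := B.mulVecLin with hTdef
  have hker : LinearMap.ker (T.domRestrict S) = ⊥ := by
    rw [LinearMap.ker_eq_bot']
    rintro ⟨u, hu⟩ h
    have h0 : B *ᵥ u = 0 := by
      simpa [hTdef, Matrix.mulVecLin_apply] using h
    have h1 := hBu u hu
    rw [h0, norm_ev_zero] at h1
    have h2 : ev u = 0 := by
      rw [← norm_le_zero_iff]
      nlinarith [norm_nonneg (ev u)]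
    exact Subtype.ext (ev_eq_zero h2)
  have hmapS : Submodule.map T S = LinearMap.range T := by
    have hrn := LinearMap.finrank_range_add_finrank_ker (T.domRestrict S)
    rw [hker, finrank_bot, add_zero, LinearMap.range_domRestrict] at hrn
    have hBrank : Module.finrank ℝ (LinearMap.range T) = A.rank := by
      rw [← hrank]; rfl
    refine Submodule.eq_of_le_of_finrank_le (Submodule.map_le_iff_le_comap.mpr ?_) ?_
    · intro u _; exact ⟨u, rfl⟩
    · rw [hBrank, hrn, hSrank]
  have hPBidem : (Bp * B) * (Bp * B) = Bp * B := by
    rw [← Matrix.mul_assoc (Bp * B) Bp B, hB2]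
  have hBBpidem : (B * Bp) * (B * Bp) = B * Bp := by
    rw [← Matrix.mul_assoc (B * Bp) B Bp, hB1]
  refine opNorm_le_of Bp (by positivity) ?_
  intro y
  have hBx_mem : B *ᵥ (Bp *ᵥ y) ∈ LinearMap.range T := ⟨Bp *ᵥ y, by simp [hTdef]⟩
  rw [← hmapS] at hBx_mem
  obtain ⟨u, huS, hTu⟩ := hBx_mem
  have hTu' : B *ᵥ u = B *ᵥ (Bp *ᵥ y) := by simpa [hTdef] using hTu
  have hxu : (Bp * B) *ᵥ u = Bp *ᵥ y := by
    rw [← Matrix.mulVec_mulVec, hTu', Matrix.mulVec_mulVec, Matrix.mulVec_mulVec, hB2]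
  have hb1 : ‖ev (Bp *ᵥ y)‖ ≤ ‖ev u‖ := by
    rw [← hxu]; exact norm_proj_le _ hB4 hPBidem u
  have hb2 : ‖ev (B *ᵥ u)‖ ≤ ‖ev y‖ := by
    rw [hTu', Matrix.mulVec_mulVec]
    exact norm_proj_le _ hB3 hBBpidem y
  have hb3 := hBu u huS
  have hmul : c * ‖Ap‖ = 1 - ‖Ap‖ * ‖E‖ := by
    rw [hcdef]; field_simp
  rw [div_mul_eq_mul_div, le_div_iff₀ hden]
  nlinarith [norm_nonneg (ev y), norm_nonneg (ev u), norm_nonneg (ev (Bp *ᵥ y)),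
    mul_le_mul_of_nonneg_left hb1 (mul_pos hc hApnorm).le]
end

section
/- Let A be a diagonalizable n×n matrix, A = X Λ X^{-1} with Λ diagonal, and let à be any n×n matrix. Then for every eigenvalue λ̃ of Ã, there exists an eigenvalue λ of A with |λ̃ − λ| ≤ κ(X) ‖à − A‖₂, where κ(X) = ‖X‖₂ ‖X^{-1}‖₂. -/
open Matrix
open scoped Matrix.Norms.L2Operator

lemma l2_opNorm_diagonal_le {n : ℕ} (g : Fin n → ℂ) (c : ℝ) (hc : 0 ≤ c)
    (h : ∀ i, ‖g i‖ ≤ c) : ‖Matrix.diagonal g‖ ≤ c := by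
  rw [Matrix.l2_opNorm_def]
  refine ContinuousLinearMap.opNorm_le_bound _ hc fun x => ?_
  show ‖toEuclideanLin (diagonal g) x‖ ≤ c * ‖x‖
  rw [EuclideanSpace.norm_eq, EuclideanSpace.norm_eq]
  rw [← Real.sqrt_sq hc, ← Real.sqrt_mul (sq_nonneg c)]
  apply Real.sqrt_le_sqrt
  rw [Finset.mul_sum]
  refine Finset.sum_le_sum fun i _ => ?_
  have : (toEuclideanLin (diagonal g) x) i = g i * x i := by
    simp [toEuclideanLin_apply, mulVec_diagonal]
  rw [this, norm_mul, mul_pow]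
  have h1 : ‖g i‖ ^ 2 ≤ c ^ 2 := pow_le_pow_left₀ (norm_nonneg _) (h i) 2
  nlinarith [sq_nonneg (‖x i‖), norm_nonneg (x i)]

set_option maxHeartbeats 1000000 in
/-- Bauer–Fike theorem: if `A = X Λ X⁻¹` is diagonalizable, then every eigenvalue
`μ` of `Ã` is within `κ(X)‖Ã − A‖₂` of some eigenvalue of `A`. -/
theorem bauer_fike {n : ℕ} (A Atilde X : Matrix (Fin n) (Fin n) ℂ)
    (d : Fin n → ℂ) (hX : IsUnit X.det)
    (hA : A = X * Matrix.diagonal d * X⁻¹)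
    (μ : ℂ) (hμ : μ ∈ spectrum ℂ Atilde) :
    ∃ lam ∈ spectrum ℂ A,
      ‖μ - lam‖ ≤ ‖X‖ * ‖X⁻¹‖ * ‖Atilde - A‖ := by
  classical
  have hXu : IsUnit X := (Matrix.isUnit_iff_isUnit_det X).mpr hX
  have hspecA : spectrum ℂ A = Set.range d := by
    obtain ⟨u, hu⟩ := hXu
    have hinv : X⁻¹ = ↑u⁻¹ := by rw [← hu, ← Matrix.coe_units_inv]
    rw [hA, hinv, ← hu, spectrum.units_conjugate, spectrum_diagonal]
  rcases Nat.eq_zero_or_pos n with hn | hn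
  · subst hn
    rw [spectrum.mem_iff] at hμ
    exact absurd (by rw [Subsingleton.elim (algebraMap ℂ _ μ - Atilde) 1]; exact isUnit_one) hμ
  haveI : Nonempty (Fin n) := ⟨⟨0, hn⟩⟩
  by_cases hin : μ ∈ spectrum ℂ A
  · exact ⟨μ, hin, by simp; positivity⟩
  · have hne : ∀ i, μ - d i ≠ 0 := by
      intro i hi
      exact hin (hspecA ▸ ⟨i, by linear_combination (norm := module) -hi⟩)
    set E := Atilde - A with hE
    set g : Fin n → ℂ := fun i => (μ - d i)⁻¹ with hg
    set C := X * diagonal g * X⁻¹ with hC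
    set B := algebraMap ℂ (Matrix (Fin n) (Fin n) ℂ) μ - A with hBdef
    have hXX : X * X⁻¹ = 1 := mul_nonsing_inv X hX
    have hXX' : X⁻¹ * X = 1 := nonsing_inv_mul X hX
    have hB : B = X * diagonal (fun i => μ - d i) * X⁻¹ := by
      have halg : algebraMap ℂ (Matrix (Fin n) (Fin n) ℂ) μ
          = X * algebraMap ℂ (Matrix (Fin n) (Fin n) ℂ) μ * X⁻¹ := by
        rw [← Algebra.commutes μ X, mul_assoc, hXX, mul_one]
      rw [hBdef, hA]
      conv_lhs => rw [halg]
      rw [← sub_mul, ← mul_sub]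
      congr 1
      congr 1
      rw [Matrix.algebraMap_eq_diagonal, Matrix.diagonal_sub]
      rfl
    have hdd : diagonal (fun i => μ - d i) * diagonal g = 1 := by
      have hf : (fun i => (μ - d i) * g i) = fun _ => (1 : ℂ) :=
        funext fun i => mul_inv_cancel₀ (hne i)
      rw [diagonal_mul_diagonal, hf, Matrix.diagonal_one]
    have hdd' : diagonal g * diagonal (fun i => μ - d i) = 1 := by
      have hf : (fun i => g i * (μ - d i)) = fun _ => (1 : ℂ) :=
        funext fun i => inv_mul_cancel₀ (hne i)
      rw [diagonal_mul_diagonal, hf, Matrix.diagonal_one]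
    have hXX'' : ∀ M : Matrix (Fin n) (Fin n) ℂ, X⁻¹ * (X * M) = M := fun M => by
      rw [← mul_assoc, hXX', one_mul]
    have hBC : B * C = 1 := by
      rw [hB, hC]
      simp only [mul_assoc]
      rw [hXX'', ← mul_assoc (diagonal fun i => μ - d i) (diagonal g), hdd, one_mul, hXX]
    have hCB : C * B = 1 := by
      rw [hB, hC]
      simp only [mul_assoc]
      rw [hXX'', ← mul_assoc (diagonal g) (diagonal fun i => μ - d i), hdd', one_mul, hXX]
    have hBdet : IsUnit B.det := IsUnit.of_mul_eq_one C.det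
      (by rw [← Matrix.det_mul, hBC, Matrix.det_one])
    have hBunit : IsUnit B := (Matrix.isUnit_iff_isUnit_det B).mpr hBdet
    have hmu2 : ¬ IsUnit (1 - C * E) := by
      intro h
      rw [spectrum.mem_iff] at hμ
      apply hμ
      have : algebraMap ℂ (Matrix (Fin n) (Fin n) ℂ) μ - Atilde = B * (1 - C * E) := by
        rw [mul_sub, mul_one, ← mul_assoc, hBC, one_mul, hBdef, hE]
        abel
      rw [this]
      exact hBunit.mul h
    have h1 : (1 : ℂ) ∈ spectrum ℂ (C * E) := by
      rw [spectrum.mem_iff]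
      simpa using hmu2
    haveI : CompleteSpace (Matrix (Fin n) (Fin n) ℂ) := FiniteDimensional.complete ℂ _
    haveI : NormOneClass (Matrix (Fin n) (Fin n) ℂ) := by
      constructor
      rw [Matrix.cstar_norm_def, _root_.map_one, ContinuousLinearMap.one_def]
      exact ContinuousLinearMap.norm_id
    have key : (1 : ℝ) ≤ ‖C * E‖ := by
      simpa using spectrum.norm_le_norm_of_mem h1
    obtain ⟨i₀, -, hmin⟩ := Finset.exists_min_image Finset.univ
      (fun i => ‖μ - d i‖) Finset.univ_nonempty
    set m := ‖μ - d i₀‖ with hm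
    have hmpos : 0 < m := by
      rw [hm]
      exact norm_pos_iff.mpr (hne i₀)
    have hgnorm : ∀ i, ‖g i‖ ≤ m⁻¹ := by
      intro i
      rw [hg]
      simp only [norm_inv]
      exact inv_anti₀ hmpos (hmin i (Finset.mem_univ i))
    have hD : ‖diagonal g‖ ≤ m⁻¹ := l2_opNorm_diagonal_le g m⁻¹ (by positivity) hgnorm
    have h2 : ‖C‖ ≤ ‖X‖ * m⁻¹ * ‖X⁻¹‖ := by
      calc ‖C‖ ≤ ‖X * diagonal g‖ * ‖X⁻¹‖ := norm_mul_le _ _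
        _ ≤ ‖X‖ * ‖diagonal g‖ * ‖X⁻¹‖ := by
            gcongr
            exact norm_mul_le _ _
        _ ≤ ‖X‖ * m⁻¹ * ‖X⁻¹‖ := by gcongr
    have h3 : (1 : ℝ) ≤ ‖X‖ * m⁻¹ * ‖X⁻¹‖ * ‖E‖ := by
      refine key.trans ((norm_mul_le C E).trans ?_)
      exact mul_le_mul_of_nonneg_right h2 (norm_nonneg E)
    have hfinal : m ≤ ‖X‖ * ‖X⁻¹‖ * ‖E‖ := by
      have := mul_le_mul_of_nonneg_left h3 hmpos.le
      rw [mul_one] at this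
      calc m ≤ m * (‖X‖ * m⁻¹ * ‖X⁻¹‖ * ‖E‖) := this
        _ = (m * m⁻¹) * (‖X‖ * ‖X⁻¹‖ * ‖E‖) := by ring
        _ = ‖X‖ * ‖X⁻¹‖ * ‖E‖ := by rw [mul_inv_cancel₀ hmpos.ne', one_mul]
    exact ⟨d i₀, hspecA ▸ Set.mem_range_self i₀, hfinal⟩
end
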